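/- arXiv:2409.14783 — 8 statements merged into one kernel-verified Lean document; each statement's English description precedes it below -/
import Mathlib

section
/- A bipartite graph G admits a proper list coloring if and only if the graph G' (disjoint union of G with its bipartition-swapped copy, where each copied vertex inherits the original's list) admits a balanced proper list coloring, i.e., a proper list coloring in which every color that is used is either used on exactly one vertex or used on at least one vertex in each bipartition class of G'. -/
/-- The disjoint union of `G` with a bipartition-swapped copy of itself. -/
def swapUnion {V : Type*} (G : SimpleGraph V) : SimpleGraph (V ⊕ V) :=
  SimpleGraph.fromRel (fun a b : V ⊕ V =>
    match a, b with
    | Sum.inl u, Sum.inl v => G.Adj u v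
    | Sum.inr u, Sum.inr v => G.Adj u v
    | _, _ => False)

/-- A bipartite graph `G` admits a proper list coloring iff the disjoint union `G'`
of `G` with its bipartition-swapped copy (copied vertices inheriting the lists) admits
a balanced proper list coloring: every used color is used on exactly one vertex or on
at least one vertex in each bipartition class of `G'`.  `side v = false` means `v ∈ V1`;
the bipartition of `G'` is given by `Sum.elim side (fun v => !side v)`. -/
theorem list_coloring_iff_balanced {V : Type*} (k : ℕ) (G : SimpleGraph V)
    (side : V → Bool) (hG : ∀ u v : V, G.Adj u v → side u ≠ side v)
    (L : V → Finset (Fin k)) :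
    (∃ c : V → Fin k, (∀ v, c v ∈ L v) ∧ ∀ u v : V, G.Adj u v → c u ≠ c v) ↔
    (∃ c' : V ⊕ V → Fin k,
      (∀ w : V ⊕ V, c' w ∈ L (Sum.elim id id w)) ∧
      (∀ a b : V ⊕ V, (swapUnion G).Adj a b → c' a ≠ c' b) ∧
      (∀ i : Fin k, (∃ w, c' w = i) →
        ((∃! w, c' w = i) ∨
         ((∃ w, c' w = i ∧ Sum.elim side (fun v => !side v) w = false) ∧
          (∃ w, c' w = i ∧ Sum.elim side (fun v => !side v) w = true))))) := by
  constructor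
  · rintro ⟨c, hL, hp⟩
    refine ⟨Sum.elim c c, ?_, ?_, ?_⟩
    · rintro (v | v) <;> exact hL v
    · rintro (a | a) (b | b) hab hc <;>
        rw [swapUnion, SimpleGraph.fromRel_adj] at hab <;>
        simp only [Sum.elim_inl, Sum.elim_inr] at hc
      · exact hab.2.elim (fun h => hp a b h hc) (fun h => hp b a h hc.symm)
      · exact hab.2.elim id id
      · exact hab.2.elim id id
      · exact hab.2.elim (fun h => hp a b h hc) (fun h => hp b a h hc.symm)
    · rintro i ⟨w, hw⟩
      right
      obtain (v | v) := w <;> simp only [Sum.elim_inl, Sum.elim_inr] at hw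
      · cases h : side v
        · exact ⟨⟨Sum.inl v, hw, h⟩, ⟨Sum.inr v, hw, by simp [h]⟩⟩
        · exact ⟨⟨Sum.inr v, hw, by simp [h]⟩, ⟨Sum.inl v, hw, h⟩⟩
      · cases h : side v
        · exact ⟨⟨Sum.inl v, hw, h⟩, ⟨Sum.inr v, hw, by simp [h]⟩⟩
        · exact ⟨⟨Sum.inr v, hw, by simp [h]⟩, ⟨Sum.inl v, hw, h⟩⟩
  · rintro ⟨c', hL, hp, _⟩
    refine ⟨fun v => c' (Sum.inl v), fun v => hL (Sum.inl v), fun u v huv => ?_⟩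
    refine hp (Sum.inl u) (Sum.inl v) ?_
    rw [swapUnion, SimpleGraph.fromRel_adj]
    exact ⟨by simp [huv.ne], Or.inl huv⟩
end

section
/- Every finite connected graph G with at least 2 vertices admits a partition of its vertex set into vertex-disjoint sets S_1,...,S_r, each of size at least 2, such that each S_i induces a subgraph of diameter at most 2 in G. -/
/-- `S` is an `s`-club of `G`: the subgraph induced by `S` has diameter at most `s`. -/
def IsGraphClub {V : Type*} (G : SimpleGraph V) (s : ℕ) (S : Set V) : Prop :=
  ∀ u v : S, ∃ p : (G.induce S).Walk u v, p.length ≤ s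

open SimpleGraph

lemma star_isClub {V : Type*} (G : SimpleGraph V) (S : Set V) (c : V) (hc : c ∈ S)
    (h : ∀ x ∈ S, x ≠ c → G.Adj c x) : IsGraphClub G 2 S := by
  have hadj : ∀ (a b : S), G.Adj a.1 b.1 → (G.induce S).Adj a b := fun _ _ hh => hh
  rintro ⟨u, hu⟩ ⟨v, hv⟩
  by_cases huc : u = c
  · subst huc
    by_cases hvc : v = u
    · subst hvc
      exact ⟨SimpleGraph.Walk.nil, by simp⟩
    · refine ⟨SimpleGraph.Walk.cons (hadj ⟨u, hu⟩ ⟨v, hv⟩ (h v hv hvc)) SimpleGraph.Walk.nil, by simp⟩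
  · by_cases hvc : v = c
    · subst hvc
      exact ⟨SimpleGraph.Walk.cons (hadj ⟨u, hu⟩ ⟨v, hv⟩ (h u hu huc).symm) SimpleGraph.Walk.nil, by simp⟩
    · exact ⟨SimpleGraph.Walk.cons (hadj ⟨u, hu⟩ ⟨c, hc⟩ (h u hu huc).symm)
        (SimpleGraph.Walk.cons (hadj ⟨c, hc⟩ ⟨v, hv⟩ (h v hv hvc)) SimpleGraph.Walk.nil), by simp⟩

lemma key_club {V : Type*} [Fintype V] [DecidableEq V] (G : SimpleGraph V) :
    ∀ n (U : Finset V), U.card ≤ n → 2 ≤ U.card →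
      (G.induce (U : Set V)).Connected →
      ∃ P : Finset (Finset V),
        (∀ S ∈ P, ∀ S' ∈ P, S ≠ S' → Disjoint S S') ∧
        P.biUnion id = U ∧
        (∀ S ∈ P, 2 ≤ S.card ∧ IsGraphClub G 2 (S : Set V)) := by
  classical
  intro n
  induction n with
  | zero => intro U h h2 _; omega
  | succ n ih =>
    intro U hUn hU2 hconn
    obtain ⟨r0, hr0⟩ := Finset.card_pos.mp (by omega : 0 < U.card)
    obtain ⟨r, hr⟩ : ∃ r : ((U : Set V) : Type _), r.1 = r0 := ⟨⟨r0, Finset.mem_coe.mpr hr0⟩, rfl⟩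
    set H := G.induce (U : Set V) with hH
    set d : ((U : Set V) : Type _) → ℕ := fun x => H.dist r x with hd
    have hdeq : ∀ x, d x = H.dist r x := fun _ => rfl
    obtain ⟨v, -, hvmax⟩ := Finset.exists_max_image Finset.univ d ⟨r, Finset.mem_univ r⟩
    have hmax : ∀ x, d x ≤ d v := fun x => hvmax x (Finset.mem_univ x)
    by_cases hD : d v ≤ 1
    · -- whole U is a star around r
      refine ⟨{U}, ?_, by simp, ?_⟩
      · intro S hS S' hS' hne
        simp only [Finset.mem_singleton] at hS hS'
        exact absurd (hS.trans hS'.symm) hne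
      · intro S hS
        simp only [Finset.mem_singleton] at hS
        rw [hS]
        refine ⟨hU2, star_isClub G _ r0 (Finset.mem_coe.mpr hr0) ?_⟩
        intro x hx hxr
        have hxU : x ∈ (U : Set V) := hx
        have hne : r ≠ (⟨x, hxU⟩ : ((U : Set V) : Type _)) := by
          intro h; exact hxr (by rw [← hr, h])
        have h1 : d ⟨x, hxU⟩ = 1 := by
          have h2 := hconn.pos_dist_of_ne hne
          have h3 := hmax ⟨x, hxU⟩
          have h4 := hdeq ⟨x, hxU⟩
          have h5 := hdeq v
          omega
        have h6 : H.Adj r ⟨x, hxU⟩ := SimpleGraph.dist_eq_one_iff_adj.mp ((hdeq _).symm.trans h1)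
        have h7 : G.Adj r.1 x := h6
        rwa [hr] at h7
    · -- d v ≥ 2
      push_neg at hD
      have hDr : d r = 0 := SimpleGraph.dist_self
      obtain ⟨p, hp⟩ := (hconn.preconnected v r).exists_walk_length_eq_dist
      have hvr : v ≠ r := by intro h; rw [h] at hD; omega
      cases p with
      | nil => exact absurd rfl hvr
      | @cons _ c _ ha q =>
        simp only [SimpleGraph.Walk.length_cons] at hp
        rw [SimpleGraph.dist_comm] at hp
        -- hp : q.length + 1 = H.dist r v
        have hdveq := hdeq v
        have hdceq := hdeq c
        have hdc_le : d c ≤ d v - 1 := by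
          have h1 := SimpleGraph.dist_le q
          rw [SimpleGraph.dist_comm] at h1
          omega
        have hdc_ge : d v ≤ d c + 1 := by
          have h1 := hconn.dist_triangle (u := r) (v := c) (w := v)
          have h2 : H.dist c v ≤ 1 := by
            have := SimpleGraph.dist_le (SimpleGraph.Walk.cons ha.symm SimpleGraph.Walk.nil)
            simpa using this
          omega
        have hdc : d c = d v - 1 := by omega
        set S : Finset V := insert c.1 (U.filter fun w =>
          ∃ hw : w ∈ (U : Set V), G.Adj c.1 w ∧ d ⟨w, hw⟩ = d v) with hSdef
        have mem_S : ∀ w, w ∈ S ↔ w = c.1 ∨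
            ∃ hw : w ∈ (U : Set V), G.Adj c.1 w ∧ d ⟨w, hw⟩ = d v := by
          intro w
          constructor
          · intro h
            rcases Finset.mem_insert.mp h with h | h
            · exact Or.inl h
            · exact Or.inr (Finset.mem_filter.mp h).2
          · rintro (h | h)
            · exact Finset.mem_insert.mpr (Or.inl h)
            · obtain ⟨hw, h2⟩ := h
              exact Finset.mem_insert.mpr
                (Or.inr (Finset.mem_filter.mpr ⟨Finset.mem_coe.mp hw, ⟨hw, h2⟩⟩))
        have hSU : S ⊆ U := by
          intro w hw
          rcases (mem_S w).mp hw with h | h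
          · rw [h]; exact Finset.mem_coe.mp c.2
          · exact Finset.mem_coe.mp h.choose
        have hGcv : G.Adj c.1 v.1 := ha.symm
        have hvS : v.1 ∈ S := (mem_S v.1).mpr (Or.inr ⟨v.2, hGcv, rfl⟩)
        have hcS : c.1 ∈ S := Finset.mem_insert_self _ _
        have hcv : c.1 ≠ v.1 := by
          intro h
          have : c = v := Subtype.ext h
          rw [this] at hdc
          omega
        have hScard : 2 ≤ S.card := Finset.one_lt_card.mpr ⟨c.1, hcS, v.1, hvS, hcv⟩
        have hstar : ∀ x ∈ S, x ≠ c.1 → G.Adj c.1 x := by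
          intro x hx hxc
          rcases (mem_S x).mp hx with h | h
          · exact absurd h hxc
          · exact h.choose_spec.1
        have hSclub : IsGraphClub G 2 (S : Set V) :=
          star_isClub G _ c.1 (Finset.mem_coe.mpr hcS) (fun x hx => hstar x (Finset.mem_coe.mp hx))
        set U' : Finset V := U \ S with hU'def
        have hrS : r0 ∉ S := by
          intro h
          rcases (mem_S r0).mp h with h | h
          · have : r = c := Subtype.ext (hr.trans h)
            rw [← this] at hdc
            omega
          · obtain ⟨hw, -, hdw⟩ := h
            have heq : (⟨r0, hw⟩ : ((U : Set V) : Type _)) = r := Subtype.ext hr.symm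
            rw [heq, hDr] at hdw
            omega
        have hrU' : r0 ∈ U' := Finset.mem_sdiff.mpr ⟨hr0, hrS⟩
        have hrU'2 : r.1 ∈ U' := by rw [hr]; exact hrU'
        have hU'U : U' ⊆ U := Finset.sdiff_subset
        -- reachability in the reduced graph
        have reach : ∀ k (w : ((U : Set V) : Type _)) (hwU' : w.1 ∈ U'), d w ≤ k →
            (G.induce (U' : Set V)).Reachable ⟨w.1, Finset.mem_coe.mpr hwU'⟩
              ⟨r.1, Finset.mem_coe.mpr hrU'2⟩ := by
          intro k
          induction k with
          | zero =>
            intro w hwU' hdw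
            have heq : r = w := hconn.dist_eq_zero_iff.mp (by
              have := hdeq w; omega)
            subst heq
            exact SimpleGraph.Reachable.refl _
          | succ k ihk =>
            intro w hwU' hdw
            by_cases hwr : w = r
            · subst hwr
              exact SimpleGraph.Reachable.refl _
            · obtain ⟨p, hp2⟩ := (hconn.preconnected w r).exists_walk_length_eq_dist
              have hwpos : 0 < d w := hconn.pos_dist_of_ne (Ne.symm hwr)
              cases p with
              | nil => exact absurd rfl hwr
              | @cons _ x _ ha2 q2 =>
                simp only [SimpleGraph.Walk.length_cons] at hp2
                rw [SimpleGraph.dist_comm] at hp2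
                -- hp2 : q2.length + 1 = H.dist r w
                have hdweq := hdeq w
                have hdxeq := hdeq x
                have hdx_le : d x ≤ d w - 1 := by
                  have h1 := SimpleGraph.dist_le q2
                  rw [SimpleGraph.dist_comm] at h1
                  omega
                have hxU' : x.1 ∈ U' := by
                  refine Finset.mem_sdiff.mpr ⟨Finset.mem_coe.mp x.2, ?_⟩
                  intro hxS
                  rcases (mem_S x.1).mp hxS with h | h
                  · -- x = c : then d w = d v and w adjacent to c, so w ∈ S
                    have hxc : x = c := Subtype.ext h
                    have hdw_ge : d v ≤ d w := by
                      rw [hxc] at hdx_le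
                      omega
                    have hdw_eq : d w = d v := le_antisymm (hmax w) hdw_ge
                    have : w.1 ∈ S := (mem_S w.1).mpr (Or.inr ⟨w.2, by
                      have : G.Adj x.1 w.1 := ha2.symm
                      rwa [hxc] at this, hdw_eq⟩)
                    exact (Finset.mem_sdiff.mp hwU').2 this
                  · -- x is a removed leaf: d x = d v, impossible
                    obtain ⟨hw2, -, hdx2⟩ := h
                    have heq : (⟨x.1, hw2⟩ : ((U : Set V) : Type _)) = x := rfl
                    rw [heq] at hdx2
                    have := hmax w
                    omega
                have hadj' : (G.induce (U' : Set V)).Adj ⟨w.1, Finset.mem_coe.mpr hwU'⟩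
                    ⟨x.1, Finset.mem_coe.mpr hxU'⟩ := ha2
                exact (hadj'.reachable).trans (ihk x hxU' (by omega))
        have hconn' : (G.induce (U' : Set V)).Connected := by
          rw [SimpleGraph.connected_iff]
          constructor
          · intro a b
            have haU : a.1 ∈ U := hU'U (Finset.mem_coe.mp a.2)
            have hbU : b.1 ∈ U := hU'U (Finset.mem_coe.mp b.2)
            have h1 := reach (d ⟨a.1, Finset.mem_coe.mpr haU⟩) ⟨a.1, Finset.mem_coe.mpr haU⟩
              (Finset.mem_coe.mp a.2) le_rfl
            have h2 := reach (d ⟨b.1, Finset.mem_coe.mpr hbU⟩) ⟨b.1, Finset.mem_coe.mpr hbU⟩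
              (Finset.mem_coe.mp b.2) le_rfl
            exact h1.trans h2.symm
          · exact ⟨⟨r.1, Finset.mem_coe.mpr hrU'2⟩⟩
        by_cases hU'2 : 2 ≤ U'.card
        · -- recurse on U'
          have hUlt : U'.card < U.card :=
            Finset.card_lt_card (Finset.sdiff_ssubset hSU ⟨c.1, hcS⟩)
          obtain ⟨P', hdisj', hcover', hparts'⟩ := ih U' (by omega) hU'2 hconn'
          have hPsub : ∀ T ∈ P', T ⊆ U' := by
            intro T hT
            rw [← hcover']
            exact Finset.subset_biUnion_of_mem id hT
          have hSdisjU' : Disjoint S U' := Finset.sdiff_disjoint.symm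
          refine ⟨insert S P', ?_, ?_, ?_⟩
          · intro A hA B hB hAB
            rcases Finset.mem_insert.mp hA with rfl | hA'
            · rcases Finset.mem_insert.mp hB with rfl | hB'
              · exact absurd rfl hAB
              · exact hSdisjU'.mono_right (hPsub B hB')
            · rcases Finset.mem_insert.mp hB with rfl | hB'
              · exact (hSdisjU'.mono_right (hPsub A hA')).symm
              · exact hdisj' A hA' B hB' hAB
          · rw [Finset.biUnion_insert, hcover']
            exact Finset.union_sdiff_of_subset hSU
          · intro T hT
            rcases Finset.mem_insert.mp hT with rfl | hT'
            · exact ⟨hScard, hSclub⟩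
            · exact hparts' T hT'
        · -- U' = {r0}; merge r into the star S
          have hU'eq : U' = {r0} := by
            apply Finset.eq_singleton_iff_unique_mem.mpr
            refine ⟨hrU', fun x hx => ?_⟩
            exact Finset.card_le_one.mp (by omega) x hx r0 hrU'
          have hD2 : d v = 2 := by
            by_contra h3
            have hD3 : 3 ≤ d v := by omega
            obtain ⟨p, hp2⟩ := (hconn.preconnected r v).exists_walk_length_eq_dist
            cases p with
            | nil =>
              simp only [SimpleGraph.Walk.length_nil] at hp2
              omega
            | @cons _ y _ ha2 q2 =>
              simp only [SimpleGraph.Walk.length_cons] at hp2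
              -- hp2 : q2.length + 1 = H.dist r v = d v
              have hdy_le : d y ≤ 1 := by
                have := SimpleGraph.dist_le (SimpleGraph.Walk.cons ha2 SimpleGraph.Walk.nil)
                simpa [hdeq] using this
              have hyr : y ≠ r := by
                intro h
                subst h
                have := SimpleGraph.dist_le q2
                omega
              have hdy : d y = 1 := by
                have := hconn.pos_dist_of_ne (Ne.symm hyr)
                have := hdeq y
                omega
              have hyS : y.1 ∉ S := by
                intro h
                rcases (mem_S y.1).mp h with h | h
                · have : y = c := Subtype.ext h
                  rw [this] at hdy
                  omega
                · obtain ⟨hw2, -, hdy2⟩ := h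
                  have heq : (⟨y.1, hw2⟩ : ((U : Set V) : Type _)) = y := rfl
                  rw [heq] at hdy2
                  omega
              have hyU' : y.1 ∈ U' := Finset.mem_sdiff.mpr ⟨Finset.mem_coe.mp y.2, hyS⟩
              rw [hU'eq, Finset.mem_singleton] at hyU'
              exact hyr (Subtype.ext (hyU'.trans hr.symm))
          have hrc : G.Adj r.1 c.1 := by
            have h1 : d c = 1 := by omega
            have h2 : H.Adj r c := SimpleGraph.dist_eq_one_iff_adj.mp ((hdeq c).symm.trans h1)
            exact h2
          set T : Finset V := insert r0 S with hTdef
          have hTU : T = U := by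
            have h1 : T = U' ∪ S := by rw [hU'eq, hTdef, Finset.insert_eq]
            rw [h1, hU'def]
            exact Finset.sdiff_union_of_subset hSU
          refine ⟨{T}, ?_, by simp [hTU], ?_⟩
          · intro A hA B hB hAB
            simp only [Finset.mem_singleton] at hA hB
            exact absurd (hA.trans hB.symm) hAB
          · intro A hA
            simp only [Finset.mem_singleton] at hA
            rw [hA]
            constructor
            · exact le_trans hScard (Finset.card_le_card (Finset.subset_insert _ _))
            · refine star_isClub G _ c.1
                (Finset.mem_coe.mpr (Finset.mem_insert.mpr (Or.inr hcS))) ?_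
              intro x hx hxc
              rcases Finset.mem_insert.mp (Finset.mem_coe.mp hx) with h | h
              · rw [h, ← hr]
                exact hrc.symm
              · exact hstar x h hxc


/-- Every finite connected graph with at least 2 vertices admits a partition of its
vertex set into vertex-disjoint sets, each of size at least 2, each inducing a
subgraph of diameter at most 2. -/
theorem connected_partition_twoClubs {V : Type*} [Fintype V] [DecidableEq V]
    (G : SimpleGraph V) (hconn : G.Connected) (hcard : 2 ≤ Fintype.card V) :
    ∃ P : Finset (Finset V),
      (∀ S ∈ P, ∀ S' ∈ P, S ≠ S' → Disjoint S S') ∧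
      P.biUnion id = Finset.univ ∧
      (∀ S ∈ P, 2 ≤ S.card ∧ IsGraphClub G 2 (S : Set V)) := by
  have hconn' : (G.induce ((Finset.univ : Finset V) : Set V)).Connected := by
    rw [Finset.coe_univ]
    exact ((SimpleGraph.induceUnivIso G).connected_iff).mpr hconn
  exact key_club G (Fintype.card V) Finset.univ (by simp) (by simpa using hcard) hconn'
end

section
/- Let M be a 2-bounded 3D matching instance and t ≥ 5. A subset of k triples of M forms a matching (no two triples agree in any coordinate) if and only if the corresponding sets S'_i = {x_i, y_i, z_i, c_i, h_{i,1}, ..., h_{i,t-4}} in G_{M,t,2} are pairwise vertex-disjoint; in that case they form a disjoint collection of (t,2)-clubs covering exactly t·k vertices. -/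
/-- `S` is an `s`-club of `G`: the subgraph induced by `S` has diameter at most `s`. -/
def IsSClub {V : Type*} (G : SimpleGraph V) (s : ℕ) (S : Set V) : Prop :=
  ∀ u v : S, ∃ p : (G.induce S).Walk u v, p.length ≤ s

/-- Vertices of the graph `G_{M,t,2}`. -/
inductive MVtx (X Y Z : Type) (m t : ℕ) where
  | vx (a : X)
  | vy (b : Y)
  | vz (c : Z)
  | vc (i : Fin m)
  | vh (i : Fin m) (j : Fin (t - 4))

/-- Base adjacency relation of `G_{M,t,2}`. -/
def MRel {X Y Z : Type} {m t : ℕ} (tr : Fin m → X × Y × Z) :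
    MVtx X Y Z m t → MVtx X Y Z m t → Prop
  | MVtx.vc i, MVtx.vh i' _ => i = i'
  | MVtx.vc i, MVtx.vx a => (tr i).1 = a
  | MVtx.vc i, MVtx.vy b => (tr i).2.1 = b
  | MVtx.vc i, MVtx.vz c => (tr i).2.2 = c
  | _, _ => False

/-- The graph `G_{M,t,2}`. -/
def MGraph {X Y Z : Type} {m t : ℕ} (tr : Fin m → X × Y × Z) :
    SimpleGraph (MVtx X Y Z m t) :=
  SimpleGraph.fromRel (MRel tr)

/-- The set `S'_i = {x_i, y_i, z_i, c_i, h_{i,1}, …, h_{i,t-4}}` in `G_{M,t,2}`. -/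
def Sset (X Y Z : Type) (m t : ℕ) (tr : Fin m → X × Y × Z) (i : Fin m) :
    Set (MVtx X Y Z m t) :=
  {MVtx.vx (tr i).1, MVtx.vy (tr i).2.1, MVtx.vz (tr i).2.2, MVtx.vc i} ∪
    {w | ∃ j : Fin (t - 4), w = MVtx.vh i j}

noncomputable instance {X Y Z : Type} {m t : ℕ} : DecidableEq (MVtx X Y Z m t) :=
  Classical.decEq _

lemma mem_Sset {X Y Z : Type} {m t : ℕ} {tr : Fin m → X × Y × Z} {i : Fin m}
    {w : MVtx X Y Z m t} :
    w ∈ Sset X Y Z m t tr i ↔ w = MVtx.vx (tr i).1 ∨ w = MVtx.vy (tr i).2.1 ∨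
      w = MVtx.vz (tr i).2.2 ∨ w = MVtx.vc i ∨ ∃ j, w = MVtx.vh i j := by
  simp only [Sset, Set.mem_union, Set.mem_insert_iff, Set.mem_singleton_iff,
    Set.mem_setOf_eq]
  tauto

/-- The finset version of `Sset`. -/
noncomputable def Sfin {X Y Z : Type} {m : ℕ} (t : ℕ) (tr : Fin m → X × Y × Z) (i : Fin m) :
    Finset (MVtx X Y Z m t) :=
  {MVtx.vx (tr i).1, MVtx.vy (tr i).2.1, MVtx.vz (tr i).2.2, MVtx.vc i} ∪
    Finset.univ.image (MVtx.vh i)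

lemma coe_Sfin {X Y Z : Type} {m t : ℕ} (tr : Fin m → X × Y × Z) (i : Fin m) :
    (Sfin t tr i : Set (MVtx X Y Z m t)) = Sset X Y Z m t tr i := by
  ext w
  simp [Sfin, mem_Sset, eq_comm]

lemma card_Sfin {X Y Z : Type} {m t : ℕ} (ht : 5 ≤ t) (tr : Fin m → X × Y × Z)
    (i : Fin m) : (Sfin t tr i : Finset (MVtx X Y Z m t)).card = t := by
  have hinj : Function.Injective (MVtx.vh (X := X) (Y := Y) (Z := Z) (m := m) (t := t) i) := by
    intro a b h; cases h; rfl
  have hdisj : Disjoint ({MVtx.vx (tr i).1, MVtx.vy (tr i).2.1, MVtx.vz (tr i).2.2,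
      MVtx.vc i} : Finset (MVtx X Y Z m t)) (Finset.univ.image (MVtx.vh i)) := by
    rw [Finset.disjoint_left]
    intro w hw hw'
    simp only [Finset.mem_insert, Finset.mem_singleton] at hw
    simp only [Finset.mem_image] at hw'
    obtain ⟨j, -, rfl⟩ := hw'
    rcases hw with h | h | h | h <;> cases h
  rw [Sfin, Finset.card_union_of_disjoint hdisj,
    Finset.card_image_of_injective _ hinj]
  have h4 : ({MVtx.vx (tr i).1, MVtx.vy (tr i).2.1, MVtx.vz (tr i).2.2,
      MVtx.vc i} : Finset (MVtx X Y Z m t)).card = 4 := by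
    rw [Finset.card_insert_of_notMem (by simp), Finset.card_insert_of_notMem (by simp),
      Finset.card_insert_of_notMem (by simp), Finset.card_singleton]
  rw [h4, Finset.card_univ, Fintype.card_fin]
  omega

lemma adj_vc {X Y Z : Type} {m t : ℕ} {tr : Fin m → X × Y × Z} {i : Fin m}
    {u : MVtx X Y Z m t} (hu : u ∈ Sset X Y Z m t tr i) (hne : u ≠ MVtx.vc i) :
    (MGraph tr).Adj (MVtx.vc i) u := by
  rcases mem_Sset.mp hu with rfl | rfl | rfl | rfl | ⟨j, rfl⟩ <;>
    first
      | exact absurd rfl hne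
      | exact ⟨fun h => hne h.symm, Or.inl rfl⟩

lemma induce_adj_of_adj {V : Type*} {G : SimpleGraph V} {S : Set V} {u v : S}
    (h : G.Adj ↑u ↑v) : (G.induce S).Adj u v := h

lemma isClub_Sset {X Y Z : Type} {m t : ℕ} (tr : Fin m → X × Y × Z) (i : Fin m) :
    IsSClub (MGraph tr) 2 (Sset X Y Z m t tr i) := by
  intro u v
  by_cases huv : u = v
  · cases huv
    exact ⟨SimpleGraph.Walk.nil, by simp⟩
  have hc : (MVtx.vc i : MVtx X Y Z m t) ∈ Sset X Y Z m t tr i := by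
    rw [mem_Sset]; tauto
  have hne : (u : MVtx X Y Z m t) ≠ v := fun h => huv (Subtype.ext h)
  by_cases hu : (u : MVtx X Y Z m t) = MVtx.vc i
  · have hadj : (MGraph tr).Adj (u : MVtx X Y Z m t) (v : MVtx X Y Z m t) := by
      rw [hu]; exact adj_vc v.2 (fun h => hne (hu.trans h.symm))
    exact ⟨(induce_adj_of_adj hadj).toWalk, by simp⟩
  by_cases hv : (v : MVtx X Y Z m t) = MVtx.vc i
  · have hadj : (MGraph tr).Adj (u : MVtx X Y Z m t) (v : MVtx X Y Z m t) := by
      rw [hv]; exact (adj_vc u.2 hu).symm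
    exact ⟨(induce_adj_of_adj hadj).toWalk, by simp⟩
  · have h1 : ((MGraph tr).induce (Sset X Y Z m t tr i)).Adj u ⟨MVtx.vc i, hc⟩ :=
      induce_adj_of_adj ((adj_vc u.2 hu).symm)
    have h2 : ((MGraph tr).induce (Sset X Y Z m t tr i)).Adj ⟨MVtx.vc i, hc⟩ v :=
      induce_adj_of_adj (adj_vc v.2 hv)
    exact ⟨SimpleGraph.Walk.cons h1 h2.toWalk, by simp⟩

/-- A set `T` of triples of `M` is a matching (no two triples agree in any coordinate)
iff the corresponding sets `S'_i` in `G_{M,t,2}` are pairwise disjoint; in that case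
they are pairwise disjoint (t,2)-clubs (each of size exactly `t`) covering `t·|T|`
vertices. -/
theorem matching_iff_disjoint_clubs {X Y Z : Type} {m t : ℕ} (ht : 5 ≤ t)
    (tr : Fin m → X × Y × Z) (T : Finset (Fin m)) :
    ((∀ i ∈ T, ∀ j ∈ T, i ≠ j →
        (tr i).1 ≠ (tr j).1 ∧ (tr i).2.1 ≠ (tr j).2.1 ∧ (tr i).2.2 ≠ (tr j).2.2) ↔
      (∀ i ∈ T, ∀ j ∈ T, i ≠ j → Disjoint (Sset X Y Z m t tr i) (Sset X Y Z m t tr j))) ∧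
    ((∀ i ∈ T, ∀ j ∈ T, i ≠ j →
        (tr i).1 ≠ (tr j).1 ∧ (tr i).2.1 ≠ (tr j).2.1 ∧ (tr i).2.2 ≠ (tr j).2.2) →
      (∀ i ∈ T, IsSClub (MGraph tr) 2 (Sset X Y Z m t tr i) ∧
        (Sset X Y Z m t tr i).ncard = t) ∧
      (⋃ i ∈ T, Sset X Y Z m t tr i).ncard = t * T.card) := by
  have hdisj : (∀ i ∈ T, ∀ j ∈ T, i ≠ j →
      (tr i).1 ≠ (tr j).1 ∧ (tr i).2.1 ≠ (tr j).2.1 ∧ (tr i).2.2 ≠ (tr j).2.2) →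
      ∀ i ∈ T, ∀ j ∈ T, i ≠ j →
      Disjoint (Sset X Y Z m t tr i) (Sset X Y Z m t tr j) := by
    intro h i hi j hj hij
    obtain ⟨h1, h2, h3⟩ := h i hi j hj hij
    rw [Set.disjoint_left]
    intro w hwi hwj
    rcases mem_Sset.mp hwi with rfl | rfl | rfl | rfl | ⟨a, rfl⟩ <;>
      rcases mem_Sset.mp hwj with h' | h' | h' | h' | ⟨b, h'⟩ <;>
      simp_all
  constructor
  · constructor
    · exact hdisj
    · intro h i hi j hj hij
      have hd := Set.disjoint_left.mp (h i hi j hj hij)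
      refine ⟨fun he => ?_, fun he => ?_, fun he => ?_⟩
      · exact hd (mem_Sset.mpr (Or.inl rfl)) (mem_Sset.mpr (Or.inl (by rw [he])))
      · exact hd (mem_Sset.mpr (Or.inr (Or.inl rfl)))
          (mem_Sset.mpr (Or.inr (Or.inl (by rw [he]))))
      · exact hd (mem_Sset.mpr (Or.inr (Or.inr (Or.inl rfl))))
          (mem_Sset.mpr (Or.inr (Or.inr (Or.inl (by rw [he])))))
  · intro h
    refine ⟨fun i _ => ⟨isClub_Sset tr i, ?_⟩, ?_⟩
    · rw [← coe_Sfin, Set.ncard_coe_finset, card_Sfin ht]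
    · have hU : (⋃ i ∈ T, Sset X Y Z m t tr i) = ↑(T.biUnion (Sfin t tr)) := by
        ext w
        simp only [Set.mem_iUnion, Finset.coe_biUnion, Finset.mem_coe,
          Finset.mem_biUnion, ← coe_Sfin]
        try tauto
      rw [hU, Set.ncard_coe_finset, Finset.card_biUnion, Finset.sum_congr rfl
        (fun i _ => card_Sfin ht tr i), Finset.sum_const, smul_eq_mul, mul_comm]
      intro i hi j hj hij
      rw [Function.onFun, ← Finset.disjoint_coe, coe_Sfin, coe_Sfin]
      exact hdisj h i hi j hj hij
end

section
/- In the graph G_{M,t,3} constructed from a 2-bounded 3D matching instance M (for fixed t ≥ 8), every 3-club has size at most t, and the only 3-clubs of size exactly t are the sets N[c_i] ∪ {h_{i,j} : j ∈ [t-5]}. -/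
/-- Vertices of the graph `G_{M,t,3}`: elements of `X ∪ Y ∪ Z`, the vertices `a_i`,
the triple vertices `c_i` (`i ∈ [m]`), and the pendant vertices `h_{i,j}` (`j ∈ [t-5]`). -/
inductive MVtx3 (X Y Z : Type) (m t : ℕ) where
  | vx (a : X)
  | vy (b : Y)
  | vz (c : Z)
  | va (i : Fin m)
  | vc (i : Fin m)
  | vh (i : Fin m) (j : Fin (t - 5))

/-- Base adjacency relation of `G_{M,t,3}`: `c_i — a_i`, `a_i — h_{i,j}`, and `c_i`
joined to the three coordinates of triple `i`. -/
def MRel3 {X Y Z : Type} {m t : ℕ} (tr : Fin m → X × Y × Z) :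
    MVtx3 X Y Z m t → MVtx3 X Y Z m t → Prop
  | MVtx3.vc i, MVtx3.va i' => i = i'
  | MVtx3.va i, MVtx3.vh i' _ => i = i'
  | MVtx3.vc i, MVtx3.vx a => (tr i).1 = a
  | MVtx3.vc i, MVtx3.vy b => (tr i).2.1 = b
  | MVtx3.vc i, MVtx3.vz c => (tr i).2.2 = c
  | _, _ => False

/-- The graph `G_{M,t,3}`. -/
def MGraph3 {X Y Z : Type} {m t : ℕ} (tr : Fin m → X × Y × Z) :
    SimpleGraph (MVtx3 X Y Z m t) :=
  SimpleGraph.fromRel (MRel3 tr)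

/-- The set `N[c_i] ∪ {h_{i,j} : j ∈ [t-5]}` in `G_{M,t,3}`. -/
def Nc3 (X Y Z : Type) (m t : ℕ) (tr : Fin m → X × Y × Z) (i : Fin m) :
    Set (MVtx3 X Y Z m t) :=
  insert (MVtx3.vc i) ((MGraph3 tr).neighborSet (MVtx3.vc i)) ∪
    {w | ∃ j : Fin (t - 5), w = MVtx3.vh i j}



section W
variable {V : Type*} {G : SimpleGraph V} {S : Set V}

lemma walk_three {u v : S} (p : (G.induce S).Walk u v) (hp : p.length ≤ 3) :
    (u:V) = v ∨ G.Adj u v ∨ (∃ w ∈ S, G.Adj u w ∧ G.Adj w v) ∨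
      (∃ w₁ ∈ S, ∃ w₂ ∈ S, G.Adj u w₁ ∧ G.Adj w₁ w₂ ∧ G.Adj w₂ v) := by
  match p with
  | .nil => left; rfl
  | .cons h .nil => right; left; exact h
  | .cons (v := w) h (.cons h2 .nil) =>
    right; right; left; exact ⟨w, w.2, h, h2⟩
  | .cons (v := w1) h (.cons (v := w2) h2 (.cons h3 .nil)) =>
    right; right; right; exact ⟨w1, w1.2, w2, w2.2, h, h2, h3⟩
  | .cons _ (.cons _ (.cons _ (.cons _ q))) =>
    simp [SimpleGraph.Walk.length_cons] at hp; omega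

lemma club_chain (hS : IsSClub G 3 S) {u v : V} (hu : u ∈ S) (hv : v ∈ S) :
    u = v ∨ G.Adj u v ∨ (∃ w ∈ S, G.Adj u w ∧ G.Adj w v) ∨
      (∃ w₁ ∈ S, ∃ w₂ ∈ S, G.Adj u w₁ ∧ G.Adj w₁ w₂ ∧ G.Adj w₂ v) := by
  obtain ⟨p, hp⟩ := hS ⟨u, hu⟩ ⟨v, hv⟩
  exact walk_three p hp

lemma chain_club (H : ∀ u v : V, u ∈ S → v ∈ S →
    u = v ∨ G.Adj u v ∨ (∃ w ∈ S, G.Adj u w ∧ G.Adj w v) ∨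
      (∃ w₁ ∈ S, ∃ w₂ ∈ S, G.Adj u w₁ ∧ G.Adj w₁ w₂ ∧ G.Adj w₂ v)) :
    IsSClub G 3 S := by
  rintro ⟨u, hu⟩ ⟨v, hv⟩
  have ind : ∀ (a b : S), G.Adj a b → (G.induce S).Adj a b := fun a b h => by
    simpa using h
  rcases H u v hu hv with h | h | ⟨w, hw, h1, h2⟩ | ⟨w1, hw1, w2, hw2, h1, h2, h3⟩
  · exact ⟨(SimpleGraph.Walk.nil.copy (by simpa using h.symm) rfl : _), by simp⟩
  · exact ⟨.cons (ind _ _ h) .nil, by simp⟩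
  · exact ⟨.cons (v := ⟨w, hw⟩) (ind _ _ h1) (.cons (ind _ _ h2) .nil), by simp⟩
  · exact ⟨.cons (v := ⟨w1, hw1⟩) (ind _ _ h1)
      (.cons (v := ⟨w2, hw2⟩) (ind _ _ h2) (.cons (ind _ _ h3) .nil)), by simp⟩
end W

section Chains
open MVtx3
variable {X Y Z : Type} {m t : ℕ} {tr : Fin m → X × Y × Z}

lemma adj_iff {u v : MVtx3 X Y Z m t} :
    (MGraph3 tr).Adj u v ↔ u ≠ v ∧ (MRel3 tr u v ∨ MRel3 tr v u) := by
  simp [MGraph3, SimpleGraph.fromRel_adj]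

/-- Triples `i` and `j` share a coordinate element which lies in `S`. -/
def Shared (tr : Fin m → X × Y × Z) (S : Set (MVtx3 X Y Z m t)) (i j : Fin m) : Prop :=
  (vx (X := X) (Y := Y) (Z := Z) (m := m) (t := t) (tr i).1 ∈ S ∧ (tr j).1 = (tr i).1) ∨
  (vy (X := X) (Y := Y) (Z := Z) (m := m) (t := t) (tr i).2.1 ∈ S ∧ (tr j).2.1 = (tr i).2.1) ∨
  (vz (X := X) (Y := Y) (Z := Z) (m := m) (t := t) (tr i).2.2 ∈ S ∧ (tr j).2.2 = (tr i).2.2)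

variable {S : Set (MVtx3 X Y Z m t)} (hS : IsSClub (MGraph3 tr) 3 S)
include hS

lemma chain_hh {i i' : Fin m} {j j' : Fin (t-5)} (hu : vh i j ∈ S) (hv : vh i' j' ∈ S) :
    i = i' := by
  rcases club_chain hS hu hv with h | h | ⟨w, hw, h1, h2⟩ |
    ⟨w1, hw1, w2, hw2, h1, h2, h3⟩
  · simp_all
  · simp [adj_iff, MRel3] at h
  · cases w <;> simp_all [adj_iff, MRel3]
  · cases w1 <;> cases w2 <;> simp_all [adj_iff, MRel3]

lemma chain_ah {i i' : Fin m} {j : Fin (t-5)} (hu : va i' ∈ S) (hv : vh i j ∈ S) :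
    i' = i := by
  rcases club_chain hS hu hv with h | h | ⟨w, hw, h1, h2⟩ |
    ⟨w1, hw1, w2, hw2, h1, h2, h3⟩
  · simp_all
  · simp_all [adj_iff, MRel3]
  · cases w <;> simp_all [adj_iff, MRel3]
  · cases w1 <;> cases w2 <;> simp_all [adj_iff, MRel3]

lemma chain_ch {i i' : Fin m} {j : Fin (t-5)} (hu : vc i' ∈ S) (hv : vh i j ∈ S) :
    i' = i := by
  rcases club_chain hS hu hv with h | h | ⟨w, hw, h1, h2⟩ |
    ⟨w1, hw1, w2, hw2, h1, h2, h3⟩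
  · simp_all
  · simp_all [adj_iff, MRel3]
  · cases w <;> simp_all [adj_iff, MRel3]
  · cases w1 <;> cases w2 <;> simp_all [adj_iff, MRel3]

lemma chain_xh {i : Fin m} {j : Fin (t-5)} {a : X} (hu : vx a ∈ S) (hv : vh i j ∈ S) :
    (tr i).1 = a := by
  rcases club_chain hS hu hv with h | h | ⟨w, hw, h1, h2⟩ |
    ⟨w1, hw1, w2, hw2, h1, h2, h3⟩
  · simp_all
  · simp_all [adj_iff, MRel3]
  · cases w <;> simp_all [adj_iff, MRel3]
  · cases w1 <;> cases w2 <;> simp_all [adj_iff, MRel3]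

lemma chain_yh {i : Fin m} {j : Fin (t-5)} {b : Y} (hu : vy b ∈ S) (hv : vh i j ∈ S) :
    (tr i).2.1 = b := by
  rcases club_chain hS hu hv with h | h | ⟨w, hw, h1, h2⟩ |
    ⟨w1, hw1, w2, hw2, h1, h2, h3⟩
  · simp_all
  · simp_all [adj_iff, MRel3]
  · cases w <;> simp_all [adj_iff, MRel3]
  · cases w1 <;> cases w2 <;> simp_all [adj_iff, MRel3]

lemma chain_zh {i : Fin m} {j : Fin (t-5)} {c : Z} (hu : vz c ∈ S) (hv : vh i j ∈ S) :
    (tr i).2.2 = c := by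
  rcases club_chain hS hu hv with h | h | ⟨w, hw, h1, h2⟩ |
    ⟨w1, hw1, w2, hw2, h1, h2, h3⟩
  · simp_all
  · simp_all [adj_iff, MRel3]
  · cases w <;> simp_all [adj_iff, MRel3]
  · cases w1 <;> cases w2 <;> simp_all [adj_iff, MRel3]

lemma chain_aa {i i' : Fin m} (hu : va i ∈ S) (hv : va i' ∈ S) : i = i' := by
  rcases club_chain hS hu hv with h | h | ⟨w, hw, h1, h2⟩ |
    ⟨w1, hw1, w2, hw2, h1, h2, h3⟩
  · simp_all
  · simp_all [adj_iff, MRel3]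
  · cases w <;> simp_all [adj_iff, MRel3]
  · cases w1 <;> cases w2 <;> simp_all [adj_iff, MRel3]

lemma chain_ax {i : Fin m} {a : X} (hu : va i ∈ S) (hv : vx a ∈ S) : (tr i).1 = a := by
  rcases club_chain hS hu hv with h | h | ⟨w, hw, h1, h2⟩ |
    ⟨w1, hw1, w2, hw2, h1, h2, h3⟩
  · simp_all
  · simp_all [adj_iff, MRel3]
  · cases w <;> simp_all [adj_iff, MRel3]
  · cases w1 <;> cases w2 <;> simp_all [adj_iff, MRel3]

lemma chain_ay {i : Fin m} {b : Y} (hu : va i ∈ S) (hv : vy b ∈ S) : (tr i).2.1 = b := by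
  rcases club_chain hS hu hv with h | h | ⟨w, hw, h1, h2⟩ |
    ⟨w1, hw1, w2, hw2, h1, h2, h3⟩
  · simp_all
  · simp_all [adj_iff, MRel3]
  · cases w <;> simp_all [adj_iff, MRel3]
  · cases w1 <;> cases w2 <;> simp_all [adj_iff, MRel3]

lemma chain_az {i : Fin m} {c : Z} (hu : va i ∈ S) (hv : vz c ∈ S) : (tr i).2.2 = c := by
  rcases club_chain hS hu hv with h | h | ⟨w, hw, h1, h2⟩ |
    ⟨w1, hw1, w2, hw2, h1, h2, h3⟩
  · simp_all
  · simp_all [adj_iff, MRel3]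
  · cases w <;> simp_all [adj_iff, MRel3]
  · cases w1 <;> cases w2 <;> simp_all [adj_iff, MRel3]

lemma chain_cc {i j : Fin m} (hu : vc i ∈ S) (hv : vc j ∈ S) :
    i = j ∨ Shared tr S i j := by
  rcases club_chain hS hu hv with h | h | ⟨w, hw, h1, h2⟩ |
    ⟨w1, hw1, w2, hw2, h1, h2, h3⟩
  · simp_all
  · simp_all [adj_iff, MRel3]
  · cases w with
    | vx a =>
      simp [adj_iff, MRel3] at h1 h2
      exact Or.inr (Or.inl ⟨h1 ▸ hw, h2.trans h1.symm⟩)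
    | vy b =>
      simp [adj_iff, MRel3] at h1 h2
      exact Or.inr (Or.inr (Or.inl ⟨h1 ▸ hw, h2.trans h1.symm⟩))
    | vz c =>
      simp [adj_iff, MRel3] at h1 h2
      exact Or.inr (Or.inr (Or.inr ⟨h1 ▸ hw, h2.trans h1.symm⟩))
    | va k => simp [adj_iff, MRel3] at h1 h2; exact Or.inl (h1.trans h2.symm)
    | vc k => simp [adj_iff, MRel3] at h1
    | vh k jj => simp [adj_iff, MRel3] at h1
  · cases w1 <;> cases w2 <;> simp_all [adj_iff, MRel3]

lemma chain_ac {i j : Fin m} (hu : va i ∈ S) (hv : vc j ∈ S) :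
    i = j ∨ Shared tr S i j := by
  rcases club_chain hS hu hv with h | h | ⟨w, hw, h1, h2⟩ |
    ⟨w1, hw1, w2, hw2, h1, h2, h3⟩
  · simp_all
  · simp [adj_iff, MRel3] at h; exact Or.inl h.symm
  · cases w <;> simp_all [adj_iff, MRel3]
  · cases w1 with
    | vc k =>
      cases w2 with
      | va k' =>
        simp [adj_iff, MRel3] at h1 h2 h3
        exact Or.inl (h1.symm.trans (h2.trans h3.symm))
      | vx a =>
        simp [adj_iff, MRel3] at h1 h2 h3
        subst h1
        exact Or.inr (Or.inl ⟨h2 ▸ hw2, h3.trans h2.symm⟩)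
      | vy b =>
        simp [adj_iff, MRel3] at h1 h2 h3
        subst h1
        exact Or.inr (Or.inr (Or.inl ⟨h2 ▸ hw2, h3.trans h2.symm⟩))
      | vz c =>
        simp [adj_iff, MRel3] at h1 h2 h3
        subst h1
        exact Or.inr (Or.inr (Or.inr ⟨h2 ▸ hw2, h3.trans h2.symm⟩))
      | vc k' => simp [adj_iff, MRel3] at h2
      | vh k' jj => simp [adj_iff, MRel3] at h2
    | vh k jj =>
      cases w2 <;> simp [adj_iff, MRel3] at h1 h2 h3 <;> exact Or.inl (by rw [h1, h3, h2])
    | vx a => simp [adj_iff, MRel3] at h1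
    | vy b => simp [adj_iff, MRel3] at h1
    | vz c => simp [adj_iff, MRel3] at h1
    | va k => simp [adj_iff, MRel3] at h1

lemma chain_xx {a a' : X} (hu : vx a ∈ S) (hv : vx a' ∈ S) :
    a = a' ∨ ∃ k : Fin m, vc (X := X) (Y := Y) (Z := Z) (t := t) k ∈ S ∧
      (tr k).1 = a ∧ (tr k).1 = a' := by
  rcases club_chain hS hu hv with h | h | ⟨w, hw, h1, h2⟩ |
    ⟨w1, hw1, w2, hw2, h1, h2, h3⟩
  · simp_all
  · simp_all [adj_iff, MRel3]
  · cases w <;> simp_all [adj_iff, MRel3] <;> tauto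
  · cases w1 <;> cases w2 <;> simp_all [adj_iff, MRel3]

lemma chain_yy {b b' : Y} (hu : vy b ∈ S) (hv : vy b' ∈ S) :
    b = b' ∨ ∃ k : Fin m, vc (X := X) (Y := Y) (Z := Z) (t := t) k ∈ S ∧
      (tr k).2.1 = b ∧ (tr k).2.1 = b' := by
  rcases club_chain hS hu hv with h | h | ⟨w, hw, h1, h2⟩ |
    ⟨w1, hw1, w2, hw2, h1, h2, h3⟩
  · simp_all
  · simp_all [adj_iff, MRel3]
  · cases w <;> simp_all [adj_iff, MRel3] <;> tauto
  · cases w1 <;> cases w2 <;> simp_all [adj_iff, MRel3]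

lemma chain_zz {c c' : Z} (hu : vz c ∈ S) (hv : vz c' ∈ S) :
    c = c' ∨ ∃ k : Fin m, vc (X := X) (Y := Y) (Z := Z) (t := t) k ∈ S ∧
      (tr k).2.2 = c ∧ (tr k).2.2 = c' := by
  rcases club_chain hS hu hv with h | h | ⟨w, hw, h1, h2⟩ |
    ⟨w1, hw1, w2, hw2, h1, h2, h3⟩
  · simp_all
  · simp_all [adj_iff, MRel3]
  · cases w <;> simp_all [adj_iff, MRel3] <;> tauto
  · cases w1 <;> cases w2 <;> simp_all [adj_iff, MRel3]

lemma chain_xy {a : X} {b : Y} (hu : vx a ∈ S) (hv : vy b ∈ S) :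
    ∃ k : Fin m, vc (X := X) (Y := Y) (Z := Z) (t := t) k ∈ S ∧
      (tr k).1 = a ∧ (tr k).2.1 = b := by
  rcases club_chain hS hu hv with h | h | ⟨w, hw, h1, h2⟩ |
    ⟨w1, hw1, w2, hw2, h1, h2, h3⟩
  · simp_all
  · simp_all [adj_iff, MRel3]
  · cases w <;> simp_all [adj_iff, MRel3] <;> tauto
  · cases w1 <;> cases w2 <;> simp_all [adj_iff, MRel3]

lemma chain_xz {a : X} {c : Z} (hu : vx a ∈ S) (hv : vz c ∈ S) :
    ∃ k : Fin m, vc (X := X) (Y := Y) (Z := Z) (t := t) k ∈ S ∧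
      (tr k).1 = a ∧ (tr k).2.2 = c := by
  rcases club_chain hS hu hv with h | h | ⟨w, hw, h1, h2⟩ |
    ⟨w1, hw1, w2, hw2, h1, h2, h3⟩
  · simp_all
  · simp_all [adj_iff, MRel3]
  · cases w <;> simp_all [adj_iff, MRel3] <;> tauto
  · cases w1 <;> cases w2 <;> simp_all [adj_iff, MRel3]

lemma chain_yz {b : Y} {c : Z} (hu : vy b ∈ S) (hv : vz c ∈ S) :
    ∃ k : Fin m, vc (X := X) (Y := Y) (Z := Z) (t := t) k ∈ S ∧
      (tr k).2.1 = b ∧ (tr k).2.2 = c := by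
  rcases club_chain hS hu hv with h | h | ⟨w, hw, h1, h2⟩ |
    ⟨w1, hw1, w2, hw2, h1, h2, h3⟩
  · simp_all
  · simp_all [adj_iff, MRel3]
  · cases w <;> simp_all [adj_iff, MRel3] <;> tauto
  · cases w1 <;> cases w2 <;> simp_all [adj_iff, MRel3]

end Chains

section Nc
open MVtx3
variable {X Y Z : Type} {m t : ℕ} {tr : Fin m → X × Y × Z}

lemma adj_iff' {u v : MVtx3 X Y Z m t} :
    (MGraph3 tr).Adj u v ↔ u ≠ v ∧ (MRel3 tr u v ∨ MRel3 tr v u) := by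
  simp [MGraph3, SimpleGraph.fromRel_adj]

lemma mem_Nc3_iff {w : MVtx3 X Y Z m t} {i : Fin m} :
    w ∈ Nc3 X Y Z m t tr i ↔
      w = vc i ∨ w = va i ∨ w = vx (tr i).1 ∨ w = vy (tr i).2.1 ∨ w = vz (tr i).2.2 ∨
        ∃ j, w = vh i j := by
  cases w <;>
    simp [Nc3, SimpleGraph.mem_neighborSet, adj_iff', MRel3, eq_comm] <;> tauto

lemma Nc3_eq (i : Fin m) :
    Nc3 X Y Z m t tr i =
      ({vc i, va i, vx (tr i).1, vy (tr i).2.1, vz (tr i).2.2} : Set (MVtx3 X Y Z m t)) ∪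
        Set.range (vh i) := by
  ext w
  rw [mem_Nc3_iff]
  simp [Set.range, eq_comm]
  tauto

lemma Nc3_finite (i : Fin m) : (Nc3 X Y Z m t tr i).Finite := by
  rw [Nc3_eq]
  exact Set.Finite.union (by
    exact (Set.finite_singleton _).insert _ |>.insert _ |>.insert _ |>.insert _)
    (Set.finite_range _)

lemma Nc3_ncard (ht : 8 ≤ t) (i : Fin m) : (Nc3 X Y Z m t tr i).ncard = t := by
  rw [Nc3_eq]
  have hinj : Function.Injective (vh (X := X) (Y := Y) (Z := Z) (m := m) (t := t) i) := by
    intro a b h; cases h; rfl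
  have hd : Disjoint ({vc i, va i, vx (tr i).1, vy (tr i).2.1, vz (tr i).2.2} :
      Set (MVtx3 X Y Z m t)) (Set.range (vh i)) := by
    simp [Set.disjoint_left]
  rw [Set.ncard_union_eq hd (by
      exact (Set.finite_singleton _).insert _ |>.insert _ |>.insert _ |>.insert _)
    (Set.finite_range _)]
  have h1 : ({vc i, va i, vx (tr i).1, vy (tr i).2.1, vz (tr i).2.2} :
      Set (MVtx3 X Y Z m t)).ncard = 5 := by
    rw [Set.ncard_insert_of_notMem (by simp), Set.ncard_insert_of_notMem (by simp),
      Set.ncard_insert_of_notMem (by simp), Set.ncard_insert_of_notMem (by simp),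
      Set.ncard_singleton]
  have h2 : (Set.range (vh (X := X) (Y := Y) (Z := Z) (m := m) (t := t) i)).ncard = t - 5 := by
    rw [← Set.image_univ, Set.ncard_image_of_injective _ hinj, Set.ncard_univ,
      Nat.card_eq_fintype_card, Fintype.card_fin]
  rw [h1, h2]
  omega
end Nc

section Part2
open MVtx3
variable {X Y Z : Type} {m t : ℕ} {tr : Fin m → X × Y × Z}

lemma Nc3_isClub (i : Fin m) : IsSClub (MGraph3 tr) 3 (Nc3 X Y Z m t tr i) := by
  apply chain_club
  intro u v hu hv
  have memc : vc (X := X) (Y := Y) (Z := Z) (t := t) i ∈ Nc3 X Y Z m t tr i := by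
    rw [mem_Nc3_iff]; tauto
  have mema : va (X := X) (Y := Y) (Z := Z) (t := t) i ∈ Nc3 X Y Z m t tr i := by
    rw [mem_Nc3_iff]; tauto
  rw [mem_Nc3_iff] at hu hv
  rcases hu with rfl | rfl | rfl | rfl | rfl | ⟨j, rfl⟩ <;>
    rcases hv with rfl | rfl | rfl | rfl | rfl | ⟨j', rfl⟩ <;>
    first
    | (left; rfl)
    | (right; left; (simp [adj_iff, MRel3]; done))
    | (right; right; left;
        refine ⟨vc i, memc, ?_, ?_⟩ <;> (simp [adj_iff, MRel3]; done))
    | (right; right; left;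
        refine ⟨va i, mema, ?_, ?_⟩ <;> (simp [adj_iff, MRel3]; done))
    | (right; right; right;
        refine ⟨vc i, memc, va i, mema, ?_, ?_, ?_⟩ <;> (simp [adj_iff, MRel3]; done))
    | (right; right; right;
        refine ⟨va i, mema, vc i, memc, ?_, ?_, ?_⟩ <;> (simp [adj_iff, MRel3]; done))
end Part2

section Counting
open MVtx3
variable {X Y Z : Type} {m t : ℕ} {tr : Fin m → X × Y × Z}

lemma three_le {T : Set (Fin m)} {i j k : Fin m} (hi : i ∈ T) (hj : j ∈ T) (hk : k ∈ T)
    (hij : i ≠ j) (hik : i ≠ k) (hjk : j ≠ k) (hT : T.ncard ≤ 2) : False := by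
  have h3 : ({i, j, k} : Set (Fin m)).ncard = 3 :=
    Set.ncard_eq_three.mpr ⟨i, j, k, hij, hik, hjk, rfl⟩
  have hsub : ({i, j, k} : Set (Fin m)) ⊆ T := by
    simp [Set.insert_subset_iff, hi, hj, hk]
  have := Set.ncard_le_ncard hsub (Set.toFinite T)
  omega

lemma pairX (hX : ∀ a : X, ({i : Fin m | (tr i).1 = a}).ncard ≤ 2) {k j j' : Fin m}
    (hjj : j ≠ j') (hk : (tr k).1 = (tr j).1) (hj' : (tr j').1 = (tr j).1) :
    k = j ∨ k = j' := by
  by_contra h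
  push_neg at h
  exact three_le (T := {i : Fin m | (tr i).1 = (tr j).1}) hk rfl hj' h.1 h.2 hjj
    (hX (tr j).1)

lemma pairY (hY : ∀ b : Y, ({i : Fin m | (tr i).2.1 = b}).ncard ≤ 2) {k j j' : Fin m}
    (hjj : j ≠ j') (hk : (tr k).2.1 = (tr j).2.1) (hj' : (tr j').2.1 = (tr j).2.1) :
    k = j ∨ k = j' := by
  by_contra h
  push_neg at h
  exact three_le (T := {i : Fin m | (tr i).2.1 = (tr j).2.1}) hk rfl hj' h.1 h.2 hjj
    (hY (tr j).2.1)

lemma pairZ (hZ : ∀ c : Z, ({i : Fin m | (tr i).2.2 = c}).ncard ≤ 2) {k j j' : Fin m}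
    (hjj : j ≠ j') (hk : (tr k).2.2 = (tr j).2.2) (hj' : (tr j').2.2 = (tr j).2.2) :
    k = j ∨ k = j' := by
  by_contra h
  push_neg at h
  exact three_le (T := {i : Fin m | (tr i).2.2 = (tr j).2.2}) hk rfl hj' h.1 h.2 hjj
    (hZ (tr j).2.2)

variable {S : Set (MVtx3 X Y Z m t)}

lemma caseA (hS : IsSClub (MGraph3 tr) 3 S) {i : Fin m} {j0 : Fin (t - 5)}
    (hh : vh i j0 ∈ S) : S ⊆ Nc3 X Y Z m t tr i := by
  intro v hv
  rw [mem_Nc3_iff]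
  cases v with
  | vx a => have := chain_xh hS hv hh; tauto
  | vy b => have := chain_yh hS hv hh; tauto
  | vz c => have := chain_zh hS hv hh; tauto
  | va i' => have := chain_ah hS hv hh; subst this; tauto
  | vc i' => have := chain_ch hS hv hh; subst this; tauto
  | vh i' j' => have := (chain_hh hS hh hv); subst this; tauto

lemma no_four_c (hX : ∀ a : X, ({i : Fin m | (tr i).1 = a}).ncard ≤ 2)
    (hY : ∀ b : Y, ({i : Fin m | (tr i).2.1 = b}).ncard ≤ 2)
    (hZ : ∀ c : Z, ({i : Fin m | (tr i).2.2 = c}).ncard ≤ 2)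
    (hS : IsSClub (MGraph3 tr) 3 S) {j1 j2 j3 j4 : Fin m}
    (h1 : vc j1 ∈ S) (h2 : vc j2 ∈ S) (h3 : vc j3 ∈ S) (h4 : vc j4 ∈ S)
    (d12 : j1 ≠ j2) (d13 : j1 ≠ j3) (d14 : j1 ≠ j4) (d23 : j2 ≠ j3) (d24 : j2 ≠ j4)
    (d34 : j3 ≠ j4) : False := by
  rcases chain_cc hS h1 h2 with rfl | s12
  · exact d12 rfl
  rcases chain_cc hS h3 h4 with rfl | s34
  · exact d34 rfl
  rcases s12 with ⟨e1S, e1⟩ | ⟨e1S, e1⟩ | ⟨e1S, e1⟩ <;>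
    rcases s34 with ⟨e2S, e2⟩ | ⟨e2S, e2⟩ | ⟨e2S, e2⟩
  · rcases chain_xx hS e1S e2S with heq | ⟨k, hkS, hk1, hk3⟩
    · exact three_le (T := {i : Fin m | (tr i).1 = (tr j1).1}) rfl e1 heq.symm
        d12 d13 d23 (hX (tr j1).1)
    · rcases pairX hX d12 hk1 e1 with rfl | rfl <;>
        rcases pairX hX d34 (by rw [hk3]) (by rw [e2]) with rfl | rfl <;> tauto
  · rcases chain_xy hS e1S e2S with ⟨k, hkS, hk1, hk3⟩
    rcases pairX hX d12 hk1 e1 with rfl | rfl <;>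
      rcases pairY hY d34 (by rw [hk3]) (by rw [e2]) with rfl | rfl <;> tauto
  · rcases chain_xz hS e1S e2S with ⟨k, hkS, hk1, hk3⟩
    rcases pairX hX d12 hk1 e1 with rfl | rfl <;>
      rcases pairZ hZ d34 (by rw [hk3]) (by rw [e2]) with rfl | rfl <;> tauto
  · rcases chain_xy hS e2S e1S with ⟨k, hkS, hk3, hk1⟩
    rcases pairY hY d12 hk1 e1 with rfl | rfl <;>
      rcases pairX hX d34 (by rw [hk3]) (by rw [e2]) with rfl | rfl <;> tauto
  · rcases chain_yy hS e1S e2S with heq | ⟨k, hkS, hk1, hk3⟩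
    · exact three_le (T := {i : Fin m | (tr i).2.1 = (tr j1).2.1}) rfl e1 heq.symm
        d12 d13 d23 (hY (tr j1).2.1)
    · rcases pairY hY d12 hk1 e1 with rfl | rfl <;>
        rcases pairY hY d34 (by rw [hk3]) (by rw [e2]) with rfl | rfl <;> tauto
  · rcases chain_yz hS e1S e2S with ⟨k, hkS, hk1, hk3⟩
    rcases pairY hY d12 hk1 e1 with rfl | rfl <;>
      rcases pairZ hZ d34 (by rw [hk3]) (by rw [e2]) with rfl | rfl <;> tauto
  · rcases chain_xz hS e2S e1S with ⟨k, hkS, hk3, hk1⟩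
    rcases pairZ hZ d12 hk1 e1 with rfl | rfl <;>
      rcases pairX hX d34 (by rw [hk3]) (by rw [e2]) with rfl | rfl <;> tauto
  · rcases chain_yz hS e2S e1S with ⟨k, hkS, hk3, hk1⟩
    rcases pairZ hZ d12 hk1 e1 with rfl | rfl <;>
      rcases pairY hY d34 (by rw [hk3]) (by rw [e2]) with rfl | rfl <;> tauto
  · rcases chain_zz hS e1S e2S with heq | ⟨k, hkS, hk1, hk3⟩
    · exact three_le (T := {i : Fin m | (tr i).2.2 = (tr j1).2.2}) rfl e1 heq.symm
        d12 d13 d23 (hZ (tr j1).2.2)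
    · rcases pairZ hZ d12 hk1 e1 with rfl | rfl <;>
        rcases pairZ hZ d34 (by rw [hk3]) (by rw [e2]) with rfl | rfl <;> tauto
end Counting

section CaseB
open MVtx3
variable {X Y Z : Type} {m t : ℕ} {tr : Fin m → X × Y × Z} {S : Set (MVtx3 X Y Z m t)}

lemma ncard5 {α : Type*} (a b c d e : α) : ({a, b, c, d, e} : Set α).ncard ≤ 5 := by
  have h1 : ({e} : Set α).ncard = 1 := Set.ncard_singleton e
  have h2 := Set.ncard_insert_le d ({e} : Set α)
  have h3 := Set.ncard_insert_le c ({d, e} : Set α)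
  have h4 := Set.ncard_insert_le b ({c, d, e} : Set α)
  have h5 := Set.ncard_insert_le a ({b, c, d, e} : Set α)
  omega

lemma caseB1 (hX : ∀ a : X, ({i : Fin m | (tr i).1 = a}).ncard ≤ 2)
    (hY : ∀ b : Y, ({i : Fin m | (tr i).2.1 = b}).ncard ≤ 2)
    (hZ : ∀ c : Z, ({i : Fin m | (tr i).2.2 = c}).ncard ≤ 2)
    (hS : IsSClub (MGraph3 tr) 3 S) (hnh : ∀ i j, vh i j ∉ S) {i : Fin m}
    (hai : va i ∈ S) : S.ncard ≤ 6 := by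
  classical
  set F5 : Set (MVtx3 X Y Z m t) :=
    {va i, vc i, vx (tr i).1, vy (tr i).2.1, vz (tr i).2.2} with hF5
  set T : Set (MVtx3 X Y Z m t) := S ∩ {w | ∃ j, j ≠ i ∧ w = vc j} with hT
  have hsub : S ⊆ F5 ∪ T := by
    intro v hv
    cases v with
    | vx a => have := chain_ax hS hai hv; left; simp [hF5]; tauto
    | vy b => have := chain_ay hS hai hv; left; simp [hF5]; tauto
    | vz c => have := chain_az hS hai hv; left; simp [hF5]; tauto
    | va i' => have := chain_aa hS hai hv; subst this; left; simp [hF5]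
    | vc j =>
      by_cases hj : j = i
      · subst hj; left; simp [hF5]
      · right; exact ⟨hv, j, hj, rfl⟩
    | vh i' j' => exact absurd hv (hnh _ _)
  have hTsub : T.Subsingleton := by
    rintro u ⟨huS, j, hji, rfl⟩ v ⟨hvS, k, hki, rfl⟩
    by_cases hjk : j = k
    · subst hjk; rfl
    exfalso
    rcases chain_cc hS huS hvS with rfl | sh
    · exact hjk rfl
    rcases sh with ⟨eS, ejk⟩ | ⟨eS, ejk⟩ | ⟨eS, ejk⟩
    · exact three_le (T := {i' : Fin m | (tr i').1 = (tr j).1}) rfl ejk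
        (chain_ax hS hai eS) hjk hji hki (hX (tr j).1)
    · exact three_le (T := {i' : Fin m | (tr i').2.1 = (tr j).2.1}) rfl ejk
        (chain_ay hS hai eS) hjk hji hki (hY (tr j).2.1)
    · exact three_le (T := {i' : Fin m | (tr i').2.2 = (tr j).2.2}) rfl ejk
        (chain_az hS hai eS) hjk hji hki (hZ (tr j).2.2)
  have hF5fin : F5.Finite := by
    exact (Set.finite_singleton _).insert _ |>.insert _ |>.insert _ |>.insert _
  have hTfin : T.Finite := hTsub.finite
  have h1 : S.ncard ≤ (F5 ∪ T).ncard := Set.ncard_le_ncard hsub (hF5fin.union hTfin)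
  have h2 := Set.ncard_union_le F5 T
  have h3 : F5.ncard ≤ 5 := ncard5 _ _ _ _ _
  have h4 : T.ncard ≤ 1 := (Set.ncard_le_one hTfin).mpr fun a ha b hb => hTsub ha hb
  omega

/-- The three element-vertices of triple `k`. -/
def NkSet (tr : Fin m → X × Y × Z) (k : Fin m) : Set (MVtx3 X Y Z m t) :=
  {vx (tr k).1, vy (tr k).2.1, vz (tr k).2.2}

def IsElt : MVtx3 X Y Z m t → Prop
  | vx _ => True
  | vy _ => True
  | vz _ => True
  | _ => False

lemma Nk_finite (k : Fin m) : (NkSet (t := t) tr k).Finite := by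
  exact (Set.finite_singleton _).insert _ |>.insert _

lemma Nk_ncard (k : Fin m) : (NkSet (t := t) tr k).ncard ≤ 3 := by
  have h1 : ({vz (X := X) (Y := Y) (m := m) (t := t) (tr k).2.2} :
    Set (MVtx3 X Y Z m t)).ncard = 1 := Set.ncard_singleton _
  have h2 := Set.ncard_insert_le (vy (X := X) (Z := Z) (m := m) (t := t) (tr k).2.1)
    ({vz (tr k).2.2} : Set (MVtx3 X Y Z m t))
  have h3 := Set.ncard_insert_le (vx (Y := Y) (Z := Z) (m := m) (t := t) (tr k).1)
    ({vy (tr k).2.1, vz (tr k).2.2} : Set (MVtx3 X Y Z m t))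
  exact le_trans h3 (by omega)

@[simp] lemma vx_mem_Nk {a : X} {k : Fin m} :
    vx (Y := Y) (Z := Z) (m := m) (t := t) a ∈ NkSet tr k ↔ (tr k).1 = a := by
  simp [NkSet, eq_comm]

@[simp] lemma vy_mem_Nk {b : Y} {k : Fin m} :
    vy (X := X) (Z := Z) (m := m) (t := t) b ∈ NkSet tr k ↔ (tr k).2.1 = b := by
  simp [NkSet, eq_comm]

@[simp] lemma vz_mem_Nk {c : Z} {k : Fin m} :
    vz (X := X) (Y := Y) (m := m) (t := t) c ∈ NkSet tr k ↔ (tr k).2.2 = c := by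
  simp [NkSet, eq_comm]

lemma common_c (hS : IsSClub (MGraph3 tr) 3 S) {u v : MVtx3 X Y Z m t}
    (hu : u ∈ S) (hv : v ∈ S) (heu : IsElt u) (hev : IsElt v) (hne : u ≠ v) :
    ∃ k, vc (X := X) (Y := Y) (Z := Z) (t := t) k ∈ S ∧
      u ∈ NkSet tr k ∧ v ∈ NkSet tr k := by
  cases u with
  | vx a =>
    cases v with
    | vx a' =>
      rcases chain_xx hS hu hv with heq | ⟨k, hk, h1, h2⟩
      · exact absurd (by rw [heq]) hne
      · exact ⟨k, hk, by simp [h1], by simp [h2]⟩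
    | vy b => obtain ⟨k, hk, h1, h2⟩ := chain_xy hS hu hv
              exact ⟨k, hk, by simp [h1], by simp [h2]⟩
    | vz c => obtain ⟨k, hk, h1, h2⟩ := chain_xz hS hu hv
              exact ⟨k, hk, by simp [h1], by simp [h2]⟩
    | va i => simp [IsElt] at hev
    | vc i => simp [IsElt] at hev
    | vh i j => simp [IsElt] at hev
  | vy b =>
    cases v with
    | vx a' => obtain ⟨k, hk, h1, h2⟩ := chain_xy hS hv hu
               exact ⟨k, hk, by simp [h2], by simp [h1]⟩
    | vy b' =>
      rcases chain_yy hS hu hv with heq | ⟨k, hk, h1, h2⟩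
      · exact absurd (by rw [heq]) hne
      · exact ⟨k, hk, by simp [h1], by simp [h2]⟩
    | vz c => obtain ⟨k, hk, h1, h2⟩ := chain_yz hS hu hv
              exact ⟨k, hk, by simp [h1], by simp [h2]⟩
    | va i => simp [IsElt] at hev
    | vc i => simp [IsElt] at hev
    | vh i j => simp [IsElt] at hev
  | vz c =>
    cases v with
    | vx a' => obtain ⟨k, hk, h1, h2⟩ := chain_xz hS hv hu
               exact ⟨k, hk, by simp [h2], by simp [h1]⟩
    | vy b' => obtain ⟨k, hk, h1, h2⟩ := chain_yz hS hv hu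
               exact ⟨k, hk, by simp [h2], by simp [h1]⟩
    | vz c' =>
      rcases chain_zz hS hu hv with heq | ⟨k, hk, h1, h2⟩
      · exact absurd (by rw [heq]) hne
      · exact ⟨k, hk, by simp [h1], by simp [h2]⟩
    | va i => simp [IsElt] at hev
    | vc i => simp [IsElt] at hev
    | vh i j => simp [IsElt] at hev
  | va i => simp [IsElt] at heu
  | vc i => simp [IsElt] at heu
  | vh i j => simp [IsElt] at heu

lemma nk_two (hX : ∀ a : X, ({i : Fin m | (tr i).1 = a}).ncard ≤ 2)
    (hY : ∀ b : Y, ({i : Fin m | (tr i).2.1 = b}).ncard ≤ 2)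
    (hZ : ∀ c : Z, ({i : Fin m | (tr i).2.2 = c}).ncard ≤ 2)
    {w : MVtx3 X Y Z m t} {k l j : Fin m} (hw : IsElt w) (hk : w ∈ NkSet tr k)
    (hl : w ∈ NkSet tr l) (hj : w ∈ NkSet tr j) (hkl : k ≠ l) : j = k ∨ j = l := by
  cases w with
  | vx a => rw [vx_mem_Nk] at hk hl hj
            exact pairX hX hkl (hj.trans hk.symm) (hl.trans hk.symm)
  | vy b => rw [vy_mem_Nk] at hk hl hj
            exact pairY hY hkl (hj.trans hk.symm) (hl.trans hk.symm)
  | vz c => rw [vz_mem_Nk] at hk hl hj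
            exact pairZ hZ hkl (hj.trans hk.symm) (hl.trans hk.symm)
  | va i => simp [IsElt] at hw
  | vc i => simp [IsElt] at hw
  | vh i j' => simp [IsElt] at hw
end CaseB

section CaseB2
open MVtx3
variable {X Y Z : Type} {m t : ℕ} {tr : Fin m → X × Y × Z} {S : Set (MVtx3 X Y Z m t)}

lemma caseB2_aux (hX : ∀ a : X, ({i : Fin m | (tr i).1 = a}).ncard ≤ 2)
    (hY : ∀ b : Y, ({i : Fin m | (tr i).2.1 = b}).ncard ≤ 2)
    (hZ : ∀ c : Z, ({i : Fin m | (tr i).2.2 = c}).ncard ≤ 2)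
    (hS : IsSClub (MGraph3 tr) 3 S) {E : Set (MVtx3 X Y Z m t)} (hES : E ⊆ S)
    (helt : ∀ w ∈ E, IsElt w) {k l : Fin m} (hkl : k ≠ l)
    {e1 : MVtx3 X Y Z m t} (he1 : e1 ∈ E) (he1k : e1 ∈ NkSet tr k)
    (he1l : e1 ∈ NkSet tr l)
    {w0 : MVtx3 X Y Z m t} (hw0 : w0 ∈ E) (hw0k : w0 ∈ NkSet tr k)
    (hw0l : w0 ∉ NkSet tr l) : E.ncard ≤ 4 := by
  classical
  have cover_kl : ∀ w ∈ E, w ∈ NkSet tr k ∨ w ∈ NkSet tr l := by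
    intro w hw
    by_cases hwe : w = e1
    · subst hwe; exact Or.inl he1k
    obtain ⟨j, hjS, hwj, he1j⟩ :=
      common_c hS (hES hw) (hES he1) (helt _ hw) (helt _ he1) hwe
    rcases nk_two hX hY hZ (helt _ he1) he1k he1l he1j hkl with rfl | rfl
    · exact Or.inl hwj
    · exact Or.inr hwj
  by_cases hw2ex : ∃ w2 ∈ E, w2 ∉ NkSet tr k
  · obtain ⟨w2, hw2, hw2k⟩ := hw2ex
    have hne02 : w2 ≠ w0 := fun h => hw2k (h ▸ hw0k)
    obtain ⟨r, hrS, hw2r, hw0r⟩ :=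
      common_c hS (hES hw2) (hES hw0) (helt _ hw2) (helt _ hw0) hne02
    have hrk : r ≠ k := fun h => hw2k (h ▸ hw2r)
    have hrl : r ≠ l := fun h => hw0l (h ▸ hw0r)
    have hw2l : w2 ∈ NkSet tr l := (cover_kl w2 hw2).resolve_left hw2k
    have cover3 : ∀ w ∈ E,
        (w ∈ NkSet tr k ∧ w ∈ NkSet tr l) ∨ (w ∈ NkSet tr k ∧ w ∈ NkSet tr r) ∨
          (w ∈ NkSet tr l ∧ w ∈ NkSet tr r) := by
      intro w hw
      have c1 := cover_kl w hw
      have c2 : w ∈ NkSet tr k ∨ w ∈ NkSet tr r := by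
        by_cases hwe : w = w0
        · subst hwe; exact Or.inl hw0k
        obtain ⟨j, hjS, hwj, hw0j⟩ :=
          common_c hS (hES hw) (hES hw0) (helt _ hw) (helt _ hw0) hwe
        rcases nk_two hX hY hZ (helt _ hw0) hw0k hw0r hw0j (Ne.symm hrk) with rfl | rfl
        · exact Or.inl hwj
        · exact Or.inr hwj
      have c3 : w ∈ NkSet tr l ∨ w ∈ NkSet tr r := by
        by_cases hwe : w = w2
        · subst hwe; exact Or.inl hw2l
        obtain ⟨j, hjS, hwj, hw2j⟩ :=
          common_c hS (hES hw) (hES hw2) (helt _ hw) (helt _ hw2) hwe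
        rcases nk_two hX hY hZ (helt _ hw2) hw2l hw2r hw2j (Ne.symm hrl) with rfl | rfl
        · exact Or.inl hwj
        · exact Or.inr hwj
      tauto
    set A := E ∩ (NkSet tr k ∩ NkSet tr l) with hA
    set B := E ∩ (NkSet tr k ∩ NkSet tr r) with hB
    set D := E ∩ (NkSet tr l ∩ NkSet tr r) with hD
    have hcov : E ⊆ A ∪ B ∪ D := by
      intro w hw
      rcases cover3 w hw with ⟨h1, h2⟩ | ⟨h1, h2⟩ | ⟨h1, h2⟩
      · exact Or.inl (Or.inl ⟨hw, h1, h2⟩)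
      · exact Or.inl (Or.inr ⟨hw, h1, h2⟩)
      · exact Or.inr ⟨hw, h1, h2⟩
    have hABd : Disjoint A B := by
      rw [Set.disjoint_left]
      rintro w ⟨hwE, hwk, hwl⟩ ⟨-, -, hwr⟩
      rcases nk_two hX hY hZ (helt _ hwE) hwk hwl hwr hkl with rfl | rfl
      · exact hrk rfl
      · exact hrl rfl
    have hADd : Disjoint A D := by
      rw [Set.disjoint_left]
      rintro w ⟨hwE, hwk, hwl⟩ ⟨-, -, hwr⟩
      rcases nk_two hX hY hZ (helt _ hwE) hwk hwl hwr hkl with rfl | rfl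
      · exact hrk rfl
      · exact hrl rfl
    have hBDd : Disjoint B D := by
      rw [Set.disjoint_left]
      rintro w ⟨hwE, hwk, hwr⟩ ⟨-, hwl, -⟩
      rcases nk_two hX hY hZ (helt _ hwE) hwk hwl hwr hkl with rfl | rfl
      · exact hrk rfl
      · exact hrl rfl
    have hAfin : A.Finite := Set.Finite.subset (Nk_finite k) fun w hw => hw.2.1
    have hBfin : B.Finite := Set.Finite.subset (Nk_finite k) fun w hw => hw.2.1
    have hDfin : D.Finite := Set.Finite.subset (Nk_finite l) fun w hw => hw.2.1
    have hab : A.ncard + B.ncard ≤ 3 := by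
      rw [← Set.ncard_union_eq hABd hAfin hBfin]
      exact le_trans (Set.ncard_le_ncard (by
        rintro w (⟨-, h, -⟩ | ⟨-, h, -⟩) <;> exact h) (Nk_finite k)) (Nk_ncard k)
    have had : A.ncard + D.ncard ≤ 3 := by
      rw [← Set.ncard_union_eq hADd hAfin hDfin]
      exact le_trans (Set.ncard_le_ncard (by
        rintro w (⟨-, -, h⟩ | ⟨-, h, -⟩) <;> exact h) (Nk_finite l)) (Nk_ncard l)
    have hbd : B.ncard + D.ncard ≤ 3 := by
      rw [← Set.ncard_union_eq hBDd hBfin hDfin]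
      exact le_trans (Set.ncard_le_ncard (by
        rintro w (⟨-, -, h⟩ | ⟨-, -, h⟩) <;> exact h) (Nk_finite r)) (Nk_ncard r)
    have hE1 : E.ncard ≤ (A ∪ B ∪ D).ncard :=
      Set.ncard_le_ncard hcov ((hAfin.union hBfin).union hDfin)
    have hE2 := Set.ncard_union_le (A ∪ B) D
    have hE3 := Set.ncard_union_le A B
    omega
  · push_neg at hw2ex
    have : E ⊆ NkSet tr k := hw2ex
    exact le_trans (Set.ncard_le_ncard this (Nk_finite k)) (le_trans (Nk_ncard k) (by omega))

lemma caseB2 (hX : ∀ a : X, ({i : Fin m | (tr i).1 = a}).ncard ≤ 2)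
    (hY : ∀ b : Y, ({i : Fin m | (tr i).2.1 = b}).ncard ≤ 2)
    (hZ : ∀ c : Z, ({i : Fin m | (tr i).2.2 = c}).ncard ≤ 2)
    (hS : IsSClub (MGraph3 tr) 3 S) (hnh : ∀ i j, vh i j ∉ S)
    (hna : ∀ i, va i ∉ S) : S.ncard ≤ 7 := by
  classical
  set SC := S ∩ {w | ∃ k : Fin m, w = vc k} with hSCdef
  set SE := S \ {w | ∃ k : Fin m, w = vc k} with hSEdef
  have hS_eq : SC ∪ SE = S := Set.inter_union_diff S _
  have hSEelt : ∀ w ∈ SE, IsElt w := by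
    rintro w ⟨hwS, hw⟩
    cases w with
    | va i => exact absurd hwS (hna i)
    | vh i j => exact absurd hwS (hnh i j)
    | vc k => exact absurd ⟨k, rfl⟩ hw
    | vx a => trivial
    | vy b => trivial
    | vz c => trivial
  have hSC3 : SC.ncard ≤ 3 := by
    by_contra hlt
    push_neg at hlt
    obtain ⟨T4, hT4sub, hT4⟩ := Set.exists_subset_card_eq (show (4:ℕ) ≤ SC.ncard from hlt)
    have hT4fin : T4.Finite := by
      by_contra hinf
      rw [Set.Infinite.ncard (fun h => hinf h)] at hT4
      omega
    obtain ⟨a, haT⟩ := Set.nonempty_of_ncard_ne_zero (s := T4) (by omega)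
    have h3 : (T4 \ {a}).ncard = 3 := by
      rw [Set.ncard_diff_singleton_of_mem haT, hT4]
    obtain ⟨b, c, d, hbc, hbd, hcd, heq⟩ := Set.ncard_eq_three.mp h3
    have hbm : b ∈ T4 \ {a} := by rw [heq]; simp
    have hcm : c ∈ T4 \ {a} := by rw [heq]; simp
    have hdm : d ∈ T4 \ {a} := by rw [heq]; simp
    have hab : a ≠ b := fun h => hbm.2 (by rw [← h]; rfl)
    have hac : a ≠ c := fun h => hcm.2 (by rw [← h]; rfl)
    have had : a ≠ d := fun h => hdm.2 (by rw [← h]; rfl)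
    obtain ⟨haS, ka, rfl⟩ := hT4sub haT
    obtain ⟨hbS, kb, rfl⟩ := hT4sub hbm.1
    obtain ⟨hcS, kc, rfl⟩ := hT4sub hcm.1
    obtain ⟨hdS, kd, rfl⟩ := hT4sub hdm.1
    exact no_four_c hX hY hZ hS haS hbS hcS hdS
      (fun h => hab (by rw [h])) (fun h => hac (by rw [h])) (fun h => had (by rw [h]))
      (fun h => hbc (by rw [h])) (fun h => hbd (by rw [h])) (fun h => hcd (by rw [h]))
  have hSE4 : SE.ncard ≤ 4 := by
    by_cases hsub1 : SE.Subsingleton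
    · exact le_trans ((Set.ncard_le_one hsub1.finite).mpr fun a ha b hb => hsub1 ha hb)
        (by omega)
    · rw [Set.not_subsingleton_iff] at hsub1
      obtain ⟨e1, he1, e2, he2, hne⟩ := hsub1
      obtain ⟨k0, hk0S, he1k0, he2k0⟩ :=
        common_c hS he1.1 he2.1 (hSEelt _ he1) (hSEelt _ he2) hne
      by_cases hone : ∀ w ∈ SE, w ∈ NkSet tr k0
      · exact le_trans (Set.ncard_le_ncard hone (Nk_finite k0))
          (le_trans (Nk_ncard k0) (by omega))
      · push_neg at hone
        obtain ⟨w', hw', hw'k0⟩ := hone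
        have hne1 : w' ≠ e1 := fun h => hw'k0 (h ▸ he1k0)
        obtain ⟨k1, hk1S, hw'k1, he1k1⟩ :=
          common_c hS hw'.1 he1.1 (hSEelt _ hw') (hSEelt _ he1) hne1
        have hk01 : k1 ≠ k0 := fun h => hw'k0 (h ▸ hw'k1)
        exact caseB2_aux hX hY hZ hS (Set.diff_subset) hSEelt hk01 he1 he1k1 he1k0
          hw' hw'k1 hw'k0
  have h1 : S.ncard ≤ SC.ncard + SE.ncard := by
    rw [← hS_eq]; exact Set.ncard_union_le SC SE
  omega
end CaseB2


/-- In `G_{M,t,3}` (for `t ≥ 8`, each element occurring in at most 2 triples),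
every 3-club has size at most `t`, the 3-clubs of size exactly `t` are precisely
the sets `N[c_i] ∪ {h_{i,j} : j ∈ [t-5]}`, and each of these is indeed a 3-club of
size `t`. -/
theorem threeClubs_of_MGraph3 {X Y Z : Type} {m t : ℕ} (ht : 8 ≤ t)
    (tr : Fin m → X × Y × Z)
    (hX : ∀ a : X, ({i : Fin m | (tr i).1 = a}).ncard ≤ 2)
    (hY : ∀ b : Y, ({i : Fin m | (tr i).2.1 = b}).ncard ≤ 2)
    (hZ : ∀ c : Z, ({i : Fin m | (tr i).2.2 = c}).ncard ≤ 2) :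
    (∀ S : Set (MVtx3 X Y Z m t), IsSClub (MGraph3 tr) 3 S →
      S.ncard ≤ t ∧ (S.ncard = t → ∃ i : Fin m, S = Nc3 X Y Z m t tr i)) ∧
    (∀ i : Fin m,
      IsSClub (MGraph3 tr) 3 (Nc3 X Y Z m t tr i) ∧ (Nc3 X Y Z m t tr i).ncard = t) := by
  constructor
  · intro S hS
    by_cases hhex : ∃ (i : Fin m) (j : Fin (t - 5)), MVtx3.vh i j ∈ S
    · obtain ⟨i, j0, hh⟩ := hhex
      have hsub := caseA hS hh
      have hcard : S.ncard ≤ t := by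
        have := Set.ncard_le_ncard hsub (Nc3_finite i)
        rwa [Nc3_ncard ht i] at this
      refine ⟨hcard, fun hc => ⟨i, ?_⟩⟩
      exact Set.eq_of_subset_of_ncard_le hsub
        (by rw [Nc3_ncard ht i, hc]) (Nc3_finite i)
    · push_neg at hhex
      have h7 : S.ncard ≤ 7 := by
        by_cases haex : ∃ i : Fin m, MVtx3.va i ∈ S
        · obtain ⟨i, hai⟩ := haex
          exact le_trans (caseB1 hX hY hZ hS hhex hai) (by omega)
        · push_neg at haex
          exact caseB2 hX hY hZ hS hhex haex
      exact ⟨by omega, fun hc => absurd hc (by omega)⟩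
  · intro i
    exact ⟨Nc3_isClub i, Nc3_ncard ht i⟩
end

section
/- In the graph G_{M,t,3}, every 3-club containing at least two of the vertices c_i contains no vertex h_{i,j}, contains at most 3 of the c-vertices, at most 4 vertices of X ∪ Y ∪ Z, and at most one a-vertex; hence it has at most 7 vertices. -/
/-- `S` is an `s`-club of `G`: the subgraph induced by `S` has diameter at most `s`. -/
def IsGraphSClub {V : Type*} (G : SimpleGraph V) (s : ℕ) (S : Set V) : Prop :=
  ∀ u v : S, ∃ p : (G.induce S).Walk u v, p.length ≤ s

open MVtx3

section Aux

variable {X Y Z : Type} {m t : ℕ} {tr : Fin m → X × Y × Z}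

lemma mrel_or {u v : MVtx3 X Y Z m t} (h : (MGraph3 tr).Adj u v) :
    MRel3 tr u v ∨ MRel3 tr v u := ((SimpleGraph.fromRel_adj _ _ _).1 h).2

lemma nbr_vh {u : MVtx3 X Y Z m t} {i j} (h : (MGraph3 tr).Adj u (vh i j)) : u = va i := by
  rcases mrel_or h with h' | h' <;> cases u <;> simp_all [MRel3]

lemma nbr_va {u : MVtx3 X Y Z m t} {i} (h : (MGraph3 tr).Adj u (va i)) :
    u = vc i ∨ ∃ j, u = vh i j := by
  rcases mrel_or h with h' | h' <;> cases u <;> simp_all [MRel3]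

lemma nbr_vx {u : MVtx3 X Y Z m t} {a : X} (h : (MGraph3 tr).Adj u (vx a)) :
    ∃ k, u = vc k ∧ (tr k).1 = a := by
  rcases mrel_or h with h' | h' <;> cases u <;> simp_all [MRel3]

lemma nbr_vy {u : MVtx3 X Y Z m t} {b : Y} (h : (MGraph3 tr).Adj u (vy b)) :
    ∃ k, u = vc k ∧ (tr k).2.1 = b := by
  rcases mrel_or h with h' | h' <;> cases u <;> simp_all [MRel3]

lemma nbr_vz {u : MVtx3 X Y Z m t} {c : Z} (h : (MGraph3 tr).Adj u (vz c)) :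
    ∃ k, u = vc k ∧ (tr k).2.2 = c := by
  rcases mrel_or h with h' | h' <;> cases u <;> simp_all [MRel3]

lemma nbr_vc {u : MVtx3 X Y Z m t} {i} (h : (MGraph3 tr).Adj u (vc i)) :
    u = va i ∨ u = vx (tr i).1 ∨ u = vy (tr i).2.1 ∨ u = vz (tr i).2.2 := by
  rcases mrel_or h with h' | h' <;> cases u <;> simp_all [MRel3]

lemma no_cc {i i' : Fin m} (h : (MGraph3 tr).Adj (vc i : MVtx3 X Y Z m t) (vc i')) : False := by
  rcases nbr_vc h with h' | h' | h' | h' <;> simp_all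

lemma no_aa {i i' : Fin m} (h : (MGraph3 tr).Adj (va i : MVtx3 X Y Z m t) (va i')) :
    False := by
  rcases nbr_va h with h' | ⟨j, h'⟩ <;> simp_all

lemma nbr_elem {u e : MVtx3 X Y Z m t}
    (he : (∃ a, e = vx a) ∨ (∃ b, e = vy b) ∨ (∃ c, e = vz c))
    (h : (MGraph3 tr).Adj u e) : ∃ k, u = vc k := by
  rcases he with ⟨a, rfl⟩ | ⟨b, rfl⟩ | ⟨c, rfl⟩
  · obtain ⟨k, rfl, -⟩ := nbr_vx h; exact ⟨k, rfl⟩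
  · obtain ⟨k, rfl, -⟩ := nbr_vy h; exact ⟨k, rfl⟩
  · obtain ⟨k, rfl, -⟩ := nbr_vz h; exact ⟨k, rfl⟩

lemma no_ae {i : Fin m} {e : MVtx3 X Y Z m t}
    (he : (∃ a, e = vx a) ∨ (∃ b, e = vy b) ∨ (∃ c, e = vz c))
    (h : (MGraph3 tr).Adj (va i) e) : False := by
  obtain ⟨k, hk⟩ := nbr_elem he h
  simp at hk

lemma no_ee {e e' : MVtx3 X Y Z m t}
    (he : (∃ a, e = vx a) ∨ (∃ b, e = vy b) ∨ (∃ c, e = vz c))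
    (he' : (∃ a, e' = vx a) ∨ (∃ b, e' = vy b) ∨ (∃ c, e' = vz c))
    (h : (MGraph3 tr).Adj e e') : False := by
  obtain ⟨k, hk⟩ := nbr_elem he' h
  rcases he with ⟨a, rfl⟩ | ⟨b, rfl⟩ | ⟨c, rfl⟩ <;> simp_all

end Aux

lemma walk_reach {V : Type*} {G : SimpleGraph V} {u v : V} (p : G.Walk u v) (hp : p.length ≤ 3) :
    u = v ∨ G.Adj u v ∨ (∃ w, G.Adj u w ∧ G.Adj w v) ∨
      (∃ w w', G.Adj u w ∧ G.Adj w w' ∧ G.Adj w' v) := by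
  cases p with
  | nil => exact Or.inl rfl
  | cons h q =>
    cases q with
    | nil => exact Or.inr (Or.inl h)
    | cons h' q' =>
      cases q' with
      | nil => exact Or.inr (Or.inr (Or.inl ⟨_, h, h'⟩))
      | cons h'' q'' =>
        cases q'' with
        | nil => exact Or.inr (Or.inr (Or.inr ⟨_, _, h, h', h''⟩))
        | cons h''' q''' => simp [SimpleGraph.Walk.length_cons] at hp; omega

lemma reach3 {V : Type*} {G : SimpleGraph V} {S : Set V} (hS : IsGraphSClub G 3 S) {u v : V}
    (hu : u ∈ S) (hv : v ∈ S) :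
    u = v ∨ G.Adj u v ∨ (∃ w ∈ S, G.Adj u w ∧ G.Adj w v) ∨
      (∃ w ∈ S, ∃ w' ∈ S, G.Adj u w ∧ G.Adj w w' ∧ G.Adj w' v) := by
  obtain ⟨p, hp⟩ := hS ⟨u, hu⟩ ⟨v, hv⟩
  rcases walk_reach p hp with h | h | ⟨w, h1, h2⟩ | ⟨w, w', h1, h2, h3⟩
  · exact Or.inl (congrArg Subtype.val h)
  · exact Or.inr (Or.inl (by simpa using h))
  · exact Or.inr (Or.inr (Or.inl ⟨w.1, w.2, by simpa using h1, by simpa using h2⟩))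
  · exact Or.inr (Or.inr (Or.inr ⟨w.1, w.2, w'.1, w'.2, by simpa using h1, by simpa using h2,
      by simpa using h3⟩))

lemma mem3 {α : Type*} {P : Set α} (h2 : P.ncard ≤ 2) {a b c : α} (ha : a ∈ P) (hb : b ∈ P)
    (hc : c ∈ P) (hab : a ≠ b) (hP : P.Finite) : c = a ∨ c = b := by
  by_contra hcon
  push_neg at hcon
  have hsub : ({c, a, b} : Set α) ⊆ P := by
    intro x hx
    rcases hx with rfl | rfl | rfl <;> assumption
  have h3 : ({c, a, b} : Set α).ncard = 3 := by
    rw [Set.ncard_insert_of_notMem (by simp [hcon.1, hcon.2])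
      ((Set.finite_singleton _).insert _), Set.ncard_pair hab]
  have := Set.ncard_le_ncard hsub hP
  omega

/-- Classifier of element vertices into three slots. -/
def felem {X Y Z : Type} {m t : ℕ} : MVtx3 X Y Z m t → Fin 3
  | MVtx3.vx _ => 0
  | MVtx3.vy _ => 1
  | MVtx3.vz _ => 2
  | _ => 0

/-- Every 3-club of `G_{M,t,3}` containing at least two triple vertices `c_i` contains
no pendant vertex `h_{i,j}`, at most 3 `c`-vertices, at most 4 vertices of
`X ∪ Y ∪ Z`, and at most one `a`-vertex; hence it has at most 7 vertices. -/
theorem threeClub_two_centers {X Y Z : Type} {m t : ℕ} (ht : 8 ≤ t)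
    (tr : Fin m → X × Y × Z)
    (hX : ∀ a : X, ({i : Fin m | (tr i).1 = a}).ncard ≤ 2)
    (hY : ∀ b : Y, ({i : Fin m | (tr i).2.1 = b}).ncard ≤ 2)
    (hZ : ∀ c : Z, ({i : Fin m | (tr i).2.2 = c}).ncard ≤ 2)
    (S : Set (MVtx3 X Y Z m t)) (hS : IsGraphSClub (MGraph3 tr) 3 S)
    (i₁ i₂ : Fin m) (hne : i₁ ≠ i₂)
    (h₁ : MVtx3.vc i₁ ∈ S) (h₂ : MVtx3.vc i₂ ∈ S) :
    (∀ (i : Fin m) (j : Fin (t - 5)), MVtx3.vh i j ∉ S) ∧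
    (S ∩ {w : MVtx3 X Y Z m t | ∃ i, w = MVtx3.vc i}).ncard ≤ 3 ∧
    (S ∩ {w : MVtx3 X Y Z m t |
        (∃ a, w = MVtx3.vx a) ∨ (∃ b, w = MVtx3.vy b) ∨ (∃ c, w = MVtx3.vz c)}).ncard ≤ 4 ∧
    (S ∩ {w : MVtx3 X Y Z m t | ∃ i, w = MVtx3.va i}).ncard ≤ 1 ∧
    S.ncard ≤ 7 := by
  classical
  -- at most one x-element, y-element, z-element in S
  have hxu : ∀ a a' : X, vx a ∈ S → vx a' ∈ S → a = a' := by
    intro a a' ha ha'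
    rcases reach3 hS ha ha' with h | h | ⟨w, _, h1, h2⟩ | ⟨w, _, w', _, h1, h2, h3⟩
    · simpa using h
    · obtain ⟨k, hk, -⟩ := nbr_vx h.symm; simp at hk
    · obtain ⟨k, rfl, hk⟩ := nbr_vx h1.symm
      obtain ⟨k', hk', hk2⟩ := nbr_vx h2
      obtain rfl : k = k' := by simpa using hk'
      exact hk.symm.trans hk2
    · obtain ⟨k, rfl, -⟩ := nbr_vx h1.symm
      obtain ⟨k', rfl, -⟩ := nbr_vx h3
      exact (no_cc h2).elim
  have hyu : ∀ b b' : Y, vy b ∈ S → vy b' ∈ S → b = b' := by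
    intro b b' hb hb'
    rcases reach3 hS hb hb' with h | h | ⟨w, _, h1, h2⟩ | ⟨w, _, w', _, h1, h2, h3⟩
    · simpa using h
    · obtain ⟨k, hk, -⟩ := nbr_vy h.symm; simp at hk
    · obtain ⟨k, rfl, hk⟩ := nbr_vy h1.symm
      obtain ⟨k', hk', hk2⟩ := nbr_vy h2
      obtain rfl : k = k' := by simpa using hk'
      exact hk.symm.trans hk2
    · obtain ⟨k, rfl, -⟩ := nbr_vy h1.symm
      obtain ⟨k', rfl, -⟩ := nbr_vy h3
      exact (no_cc h2).elim
  have hzu : ∀ c c' : Z, vz c ∈ S → vz c' ∈ S → c = c' := by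
    intro c c' hc hc'
    rcases reach3 hS hc hc' with h | h | ⟨w, _, h1, h2⟩ | ⟨w, _, w', _, h1, h2, h3⟩
    · simpa using h
    · obtain ⟨k, hk, -⟩ := nbr_vz h.symm; simp at hk
    · obtain ⟨k, rfl, hk⟩ := nbr_vz h1.symm
      obtain ⟨k', hk', hk2⟩ := nbr_vz h2
      obtain rfl : k = k' := by simpa using hk'
      exact hk.symm.trans hk2
    · obtain ⟨k, rfl, -⟩ := nbr_vz h1.symm
      obtain ⟨k', rfl, -⟩ := nbr_vz h3
      exact (no_cc h2).elim
  -- any two distinct c-vertices in S share an element vertex of S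
  have hcc : ∀ i i' : Fin m, i ≠ i' → vc i ∈ S → vc i' ∈ S →
      ∃ e ∈ S, ((∃ a, e = vx a) ∨ (∃ b, e = vy b) ∨ (∃ c, e = vz c)) ∧
        (MGraph3 tr).Adj (vc i) e ∧ (MGraph3 tr).Adj (vc i') e := by
    intro i i' hii hci hci'
    rcases reach3 hS hci hci' with h | h | ⟨w, hwS, h1, h2⟩ | ⟨w, hwS, w', hwS', h1, h2, h3⟩
    · exact (hii (by simpa using h)).elim
    · exact (no_cc h).elim
    · rcases nbr_vc h2 with rfl | rfl | rfl | rfl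
      · rcases nbr_vc h1.symm with h' | h' | h' | h'
        · have hii' : i' = i := by simpa using h'
          exact (hii hii'.symm).elim
        · simp at h'
        · simp at h'
        · simp at h'
      · exact ⟨_, hwS, Or.inl ⟨_, rfl⟩, h1, h2.symm⟩
      · exact ⟨_, hwS, Or.inr (Or.inl ⟨_, rfl⟩), h1, h2.symm⟩
      · exact ⟨_, hwS, Or.inr (Or.inr ⟨_, rfl⟩), h1, h2.symm⟩
    · rcases nbr_vc h1.symm with rfl | rfl | rfl | rfl <;>
        rcases nbr_vc h3 with rfl | rfl | rfl | rfl <;>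
        first
          | exact (no_aa h2).elim
          | exact (no_ae (by first
              | exact Or.inl ⟨_, rfl⟩
              | exact Or.inr (Or.inl ⟨_, rfl⟩)
              | exact Or.inr (Or.inr ⟨_, rfl⟩)) h2).elim
          | exact (no_ae (by first
              | exact Or.inl ⟨_, rfl⟩
              | exact Or.inr (Or.inl ⟨_, rfl⟩)
              | exact Or.inr (Or.inr ⟨_, rfl⟩)) h2.symm).elim
          | exact (no_ee (by first
              | exact Or.inl ⟨_, rfl⟩
              | exact Or.inr (Or.inl ⟨_, rfl⟩)
              | exact Or.inr (Or.inr ⟨_, rfl⟩)) (by first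
              | exact Or.inl ⟨_, rfl⟩
              | exact Or.inr (Or.inl ⟨_, rfl⟩)
              | exact Or.inr (Or.inr ⟨_, rfl⟩)) h2).elim
  -- any two distinct element vertices in S have a common c-neighbour
  have hec : ∀ e e' : MVtx3 X Y Z m t,
      ((∃ a, e = vx a) ∨ (∃ b, e = vy b) ∨ (∃ c, e = vz c)) →
      ((∃ a, e' = vx a) ∨ (∃ b, e' = vy b) ∨ (∃ c, e' = vz c)) →
      e ≠ e' → e ∈ S → e' ∈ S →
      ∃ k : Fin m, (MGraph3 tr).Adj (vc k) e ∧ (MGraph3 tr).Adj (vc k) e' := by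
    intro e e' he he' hee heS heS'
    rcases reach3 hS heS heS' with h | h | ⟨w, _, h1, h2⟩ | ⟨w, _, w', _, h1, h2, h3⟩
    · exact (hee h).elim
    · exact (no_ee he he' h).elim
    · obtain ⟨k, rfl⟩ := nbr_elem he h1.symm
      exact ⟨k, h1.symm, h2⟩
    · obtain ⟨k, rfl⟩ := nbr_elem he h1.symm
      obtain ⟨k', rfl⟩ := nbr_elem he' h3
      exact (no_cc h2).elim
  -- an element vertex has at most two c-neighbours
  have shared : ∀ (e : MVtx3 X Y Z m t) (k₁ k₂ k₃ : Fin m),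
      ((∃ a, e = vx a) ∨ (∃ b, e = vy b) ∨ (∃ c, e = vz c)) →
      (MGraph3 tr).Adj (vc k₁) e → (MGraph3 tr).Adj (vc k₂) e → (MGraph3 tr).Adj (vc k₃) e →
      k₁ ≠ k₂ → k₃ = k₁ ∨ k₃ = k₂ := by
    intro e k₁ k₂ k₃ he a1 a2 a3 h12
    rcases he with ⟨a, rfl⟩ | ⟨b, rfl⟩ | ⟨c, rfl⟩
    · have m1 : (tr k₁).1 = a := by
        obtain ⟨j, hj, hj2⟩ := nbr_vx a1
        obtain rfl : k₁ = j := by simpa using hj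
        exact hj2
      have m2 : (tr k₂).1 = a := by
        obtain ⟨j, hj, hj2⟩ := nbr_vx a2
        obtain rfl : k₂ = j := by simpa using hj
        exact hj2
      have m3 : (tr k₃).1 = a := by
        obtain ⟨j, hj, hj2⟩ := nbr_vx a3
        obtain rfl : k₃ = j := by simpa using hj
        exact hj2
      exact mem3 (hX a) m1 m2 m3 h12 (Set.toFinite _)
    · have m1 : (tr k₁).2.1 = b := by
        obtain ⟨j, hj, hj2⟩ := nbr_vy a1
        obtain rfl : k₁ = j := by simpa using hj
        exact hj2
      have m2 : (tr k₂).2.1 = b := by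
        obtain ⟨j, hj, hj2⟩ := nbr_vy a2
        obtain rfl : k₂ = j := by simpa using hj
        exact hj2
      have m3 : (tr k₃).2.1 = b := by
        obtain ⟨j, hj, hj2⟩ := nbr_vy a3
        obtain rfl : k₃ = j := by simpa using hj
        exact hj2
      exact mem3 (hY b) m1 m2 m3 h12 (Set.toFinite _)
    · have m1 : (tr k₁).2.2 = c := by
        obtain ⟨j, hj, hj2⟩ := nbr_vz a1
        obtain rfl : k₁ = j := by simpa using hj
        exact hj2
      have m2 : (tr k₂).2.2 = c := by
        obtain ⟨j, hj, hj2⟩ := nbr_vz a2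
        obtain rfl : k₂ = j := by simpa using hj
        exact hj2
      have m3 : (tr k₃).2.2 = c := by
        obtain ⟨j, hj, hj2⟩ := nbr_vz a3
        obtain rfl : k₃ = j := by simpa using hj
        exact hj2
      exact mem3 (hZ c) m1 m2 m3 h12 (Set.toFinite _)
  -- no pendant vertex in S
  have hnoh : ∀ (i : Fin m) (j : Fin (t - 5)), vh i j ∉ S := by
    intro i j hmem
    obtain ⟨i', hi', hc'⟩ : ∃ i', i' ≠ i ∧ vc i' ∈ S := by
      by_cases h : i = i₁
      · exact ⟨i₂, fun e => hne (e.trans h).symm, h₂⟩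
      · exact ⟨i₁, fun e => h e.symm, h₁⟩
    rcases reach3 hS hmem hc' with h | h | ⟨w, _, h1, h2⟩ | ⟨w, _, w', _, h1, h2, h3⟩
    · simp at h
    · rcases nbr_vc h with h' | h' | h' | h' <;> simp at h'
    · obtain rfl := nbr_vh h1.symm
      rcases nbr_vc h2 with h' | h' | h' | h'
      · have hii' : i = i' := by simpa using h'
        exact hi' hii'.symm
      · simp at h'
      · simp at h'
      · simp at h'
    · obtain rfl := nbr_vh h1.symm
      rcases nbr_va h2.symm with rfl | ⟨j', rfl⟩
      · exact no_cc h3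
      · rcases nbr_vc h3 with h' | h' | h' | h' <;> simp at h'
  -- at most one a-vertex in S
  have haa : ∀ p q : Fin m, va p ∈ S → va q ∈ S → p = q := by
    intro p q hp hq
    rcases reach3 hS hp hq with h | h | ⟨w, _, h1, h2⟩ | ⟨w, _, w', _, h1, h2, h3⟩
    · simpa using h
    · rcases nbr_va h with h' | ⟨j', h'⟩ <;> simp at h'
    · rcases nbr_va h1.symm with rfl | ⟨j', rfl⟩ <;> rcases nbr_va h2 with h' | ⟨j'', h'⟩
      · simpa using h'
      · simp at h'
      · simp at h'
      · have hpq : p = q ∧ j' = j'' := by simpa using h'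
        exact hpq.1
    · rcases nbr_va h1.symm with rfl | ⟨j', rfl⟩ <;> rcases nbr_va h3 with rfl | ⟨j'', rfl⟩
      · exact (no_cc h2).elim
      · exact absurd (nbr_vh h2) (by simp)
      · exact absurd (nbr_vh h2.symm) (by simp)
      · exact absurd (nbr_vh h2) (by simp)
  -- at most 3 c-vertices
  have hC3 : (S ∩ {w : MVtx3 X Y Z m t | ∃ i, w = MVtx3.vc i}).ncard ≤ 3 := by
    have key : ∀ j j' : Fin m, vc j ∈ S → vc j' ∈ S →
        j ≠ i₁ → j ≠ i₂ → j' ≠ i₁ → j' ≠ i₂ → j = j' := by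
      intro j j' hj hj' hj1 hj2 hj1' hj2'
      by_contra hjj
      obtain ⟨e, heS, heE, he1, he2⟩ := hcc i₁ i₂ hne h₁ h₂
      obtain ⟨e', heS', heE', he1', he2'⟩ := hcc j j' hjj hj hj'
      by_cases hee : e = e'
      · subst hee
        rcases shared e i₁ i₂ j heE he1 he2 he1' hne with h | h
        · exact hj1 h
        · exact hj2 h
      · obtain ⟨k, hk1, hk2⟩ := hec e e' heE heE' hee heS heS'
        have hk12 := shared e i₁ i₂ k heE he1 he2 hk1 hne
        have hkjj := shared e' j j' k heE' he1' he2' hk2 hjj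
        rcases hk12 with h | h <;> rcases hkjj with h' | h'
        · exact hj1 (h'.symm.trans h)
        · exact hj1' (h'.symm.trans h)
        · exact hj2 (h'.symm.trans h)
        · exact hj2' (h'.symm.trans h)
    by_cases hex : ∃ j, vc j ∈ S ∧ j ≠ i₁ ∧ j ≠ i₂
    · obtain ⟨j₀, hj₀, hj₀1, hj₀2⟩ := hex
      have hsub : S ∩ {w : MVtx3 X Y Z m t | ∃ i, w = MVtx3.vc i} ⊆
          {vc i₁, vc i₂, vc j₀} := by
        rintro w ⟨hwS, i, rfl⟩
        by_cases e1 : i = i₁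
        · simp [e1]
        by_cases e2 : i = i₂
        · simp [e2]
        · simp [key i j₀ hwS hj₀ e1 e2 hj₀1 hj₀2]
      have hfin3 : ({vc i₁, vc i₂, vc j₀} : Set (MVtx3 X Y Z m t)).Finite :=
        ((Set.finite_singleton _).insert _).insert _
      have hle := Set.ncard_le_ncard hsub hfin3
      have a1 := Set.ncard_insert_le (vc i₁ : MVtx3 X Y Z m t) {vc i₂, vc j₀}
      have a2 := Set.ncard_insert_le (vc i₂ : MVtx3 X Y Z m t) {vc j₀}
      have a3 : ({vc j₀} : Set (MVtx3 X Y Z m t)).ncard = 1 := Set.ncard_singleton _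
      omega
    · push_neg at hex
      have hsub : S ∩ {w : MVtx3 X Y Z m t | ∃ i, w = MVtx3.vc i} ⊆ {vc i₁, vc i₂} := by
        rintro w ⟨hwS, i, rfl⟩
        by_cases e1 : i = i₁
        · simp [e1]
        · simp [hex i hwS e1]
      have hle := Set.ncard_le_ncard hsub ((Set.finite_singleton _).insert _)
      have a1 := Set.ncard_insert_le (vc i₁ : MVtx3 X Y Z m t) {vc i₂}
      have a2 : ({vc i₂} : Set (MVtx3 X Y Z m t)).ncard = 1 := Set.ncard_singleton _
      omega
  -- element vertices : injective into Fin 3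
  have hinj : Set.InjOn felem (S ∩ {w : MVtx3 X Y Z m t |
      (∃ a, w = MVtx3.vx a) ∨ (∃ b, w = MVtx3.vy b) ∨ (∃ c, w = MVtx3.vz c)}) := by
    rintro u ⟨huS, hu⟩ v ⟨hvS, hv⟩ hf
    rcases hu with ⟨a, rfl⟩ | ⟨b, rfl⟩ | ⟨c, rfl⟩ <;>
      rcases hv with ⟨a', rfl⟩ | ⟨b', rfl⟩ | ⟨c', rfl⟩ <;>
      simp only [felem] at hf <;>
      first
        | exact absurd hf (by decide)
        | exact congrArg MVtx3.vx (hxu _ _ huS hvS)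
        | exact congrArg MVtx3.vy (hyu _ _ huS hvS)
        | exact congrArg MVtx3.vz (hzu _ _ huS hvS)
  have hE3 : (S ∩ {w : MVtx3 X Y Z m t |
      (∃ a, w = MVtx3.vx a) ∨ (∃ b, w = MVtx3.vy b) ∨ (∃ c, w = MVtx3.vz c)}).ncard ≤ 3 := by
    have := Set.ncard_le_ncard_of_injOn felem (fun a _ => Set.mem_univ (felem a)) hinj
      Set.finite_univ
    simpa [Set.ncard_univ] using this
  -- a-vertices
  have hA : (S ∩ {w : MVtx3 X Y Z m t | ∃ i, w = MVtx3.va i}).ncard ≤ 1 := by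
    by_cases hex : ∃ p, (va p : MVtx3 X Y Z m t) ∈ S
    · obtain ⟨p₀, hp₀⟩ := hex
      have hsub : S ∩ {w : MVtx3 X Y Z m t | ∃ i, w = MVtx3.va i} ⊆ {va p₀} := by
        rintro w ⟨hwS, i, rfl⟩
        simp [haa i p₀ hwS hp₀]
      simpa using Set.ncard_le_ncard hsub (Set.finite_singleton _)
    · have hsub : S ∩ {w : MVtx3 X Y Z m t | ∃ i, w = MVtx3.va i} = ∅ := by
        ext w
        simp only [Set.mem_inter_iff, Set.mem_setOf_eq, Set.mem_empty_iff_false, iff_false,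
          not_and]
        rintro hwS ⟨i, rfl⟩
        exact hex ⟨i, hwS⟩
      simp [hsub]
  -- finiteness
  have hCfin : (S ∩ {w : MVtx3 X Y Z m t | ∃ i, w = MVtx3.vc i}).Finite := by
    apply Set.Finite.subset (Set.finite_range (vc : Fin m → MVtx3 X Y Z m t))
    rintro w ⟨-, i, rfl⟩; exact ⟨i, rfl⟩
  have hAfin : (S ∩ {w : MVtx3 X Y Z m t | ∃ i, w = MVtx3.va i}).Finite := by
    apply Set.Finite.subset (Set.finite_range (va : Fin m → MVtx3 X Y Z m t))
    rintro w ⟨-, i, rfl⟩; exact ⟨i, rfl⟩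
  have hEfin : (S ∩ {w : MVtx3 X Y Z m t |
      (∃ a, w = MVtx3.vx a) ∨ (∃ b, w = MVtx3.vy b) ∨ (∃ c, w = MVtx3.vz c)}).Finite :=
    Set.Finite.of_finite_image (Set.toFinite _) hinj
  -- total
  have hcover : S ⊆ (S ∩ {w : MVtx3 X Y Z m t | ∃ i, w = MVtx3.vc i}) ∪
      ((S ∩ {w : MVtx3 X Y Z m t |
        (∃ a, w = MVtx3.vx a) ∨ (∃ b, w = MVtx3.vy b) ∨ (∃ c, w = MVtx3.vz c)}) ∪
       (S ∩ {w : MVtx3 X Y Z m t | ∃ i, w = MVtx3.va i})) := by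
    intro w hw
    cases w with
    | vx a => exact Or.inr (Or.inl ⟨hw, Or.inl ⟨a, rfl⟩⟩)
    | vy b => exact Or.inr (Or.inl ⟨hw, Or.inr (Or.inl ⟨b, rfl⟩)⟩)
    | vz c => exact Or.inr (Or.inl ⟨hw, Or.inr (Or.inr ⟨c, rfl⟩)⟩)
    | va i => exact Or.inr (Or.inr ⟨hw, i, rfl⟩)
    | vc i => exact Or.inl ⟨hw, i, rfl⟩
    | vh i j => exact (hnoh i j hw).elim
  have htot : S.ncard ≤ 7 := by
    have hu := Set.ncard_le_ncard hcover (hCfin.union (hEfin.union hAfin))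
    have u1 := Set.ncard_union_le (S ∩ {w : MVtx3 X Y Z m t | ∃ i, w = MVtx3.vc i})
      ((S ∩ {w : MVtx3 X Y Z m t |
        (∃ a, w = MVtx3.vx a) ∨ (∃ b, w = MVtx3.vy b) ∨ (∃ c, w = MVtx3.vz c)}) ∪
       (S ∩ {w : MVtx3 X Y Z m t | ∃ i, w = MVtx3.va i}))
    have u2 := Set.ncard_union_le (S ∩ {w : MVtx3 X Y Z m t |
        (∃ a, w = MVtx3.vx a) ∨ (∃ b, w = MVtx3.vy b) ∨ (∃ c, w = MVtx3.vz c)})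
      (S ∩ {w : MVtx3 X Y Z m t | ∃ i, w = MVtx3.va i})
    omega
  exact ⟨hnoh, hC3, hE3.trans (by norm_num), hA, htot⟩
end

section
/- In G_{M,t,3}, any two distinct a-vertices a_i and a_j (i ≠ j) are at distance at least 4; hence any 3-club contains at most one a-vertex. -/
def MSide {X Y Z : Type} {m t : ℕ} : MVtx3 X Y Z m t → Bool
  | MVtx3.vc _ => true
  | MVtx3.vh _ _ => true
  | _ => false

lemma adj_side {X Y Z : Type} {m t : ℕ} (tr : Fin m → X × Y × Z)
    {u v : MVtx3 X Y Z m t} (h : (MGraph3 tr).Adj u v) : MSide u ≠ MSide v := by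
  rw [MGraph3, SimpleGraph.fromRel_adj] at h
  cases u <;> cases v <;> simp_all [MRel3, MSide]

lemma walk_parity {X Y Z : Type} {m t : ℕ} (tr : Fin m → X × Y × Z)
    {u v : MVtx3 X Y Z m t} (p : (MGraph3 tr).Walk u v) :
    (MSide u = MSide v ↔ Even p.length) := by
  induction p with
  | nil => simp
  | cons h q ih =>
    have h2 := adj_side tr h
    rw [SimpleGraph.Walk.length_cons, Nat.even_add_one]
    cases hfu : MSide _ <;> cases hfw : MSide _ <;> simp_all

/-- In `G_{M,t,3}`, any two distinct `a`-vertices are at distance at least 4 (every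
walk between them has length at least 4); hence any 3-club contains at most one
`a`-vertex. -/
theorem aVertices_far_apart {X Y Z : Type} {m t : ℕ}
    (tr : Fin m → X × Y × Z) :
    (∀ i j : Fin m, i ≠ j →
      ∀ p : (MGraph3 tr).Walk (MVtx3.va i : MVtx3 X Y Z m t) (MVtx3.va j),
        4 ≤ p.length) ∧
    (∀ S : Set (MVtx3 X Y Z m t), IsSClub (MGraph3 tr) 3 S →
      ∀ i j : Fin m, MVtx3.va i ∈ S → MVtx3.va j ∈ S → i = j) := by
  have main : ∀ i j : Fin m, i ≠ j →
      ∀ p : (MGraph3 tr).Walk (MVtx3.va i : MVtx3 X Y Z m t) (MVtx3.va j),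
        4 ≤ p.length := by
    intro i j hij p
    by_contra hl
    push_neg at hl
    have hev : Even p.length := (walk_parity tr p).mp rfl
    obtain ⟨k, hk⟩ := hev
    have hk2 : p.length = 0 ∨ p.length = 2 := by omega
    rcases hk2 with h0 | h2
    · have := SimpleGraph.Walk.eq_of_length_eq_zero h0
      exact hij (by injection this)
    · cases p with
      | nil => simp at h2
      | cons h q =>
        rename_i w
        cases q with
        | nil => simp at h2
        | cons h' q' =>
          have hq' : q'.length = 0 := by
            simp only [SimpleGraph.Walk.length_cons] at h2; omega
          have heq := SimpleGraph.Walk.eq_of_length_eq_zero hq'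
          subst heq
          rw [MGraph3, SimpleGraph.fromRel_adj] at h h'
          cases w <;> simp_all [MRel3]
  refine ⟨main, ?_⟩
  intro S hclub i j hi hj
  by_contra hij
  obtain ⟨p, hp⟩ := hclub ⟨_, hi⟩ ⟨_, hj⟩
  let hom : ((MGraph3 tr).induce S) →g (MGraph3 tr) :=
    ⟨Subtype.val, fun h => h⟩
  have := main i j hij (p.map hom)
  rw [SimpleGraph.Walk.length_map] at this
  omega
end

section
/- In the graph G' constructed in the PC(k,s) reduction (s ≥ 3), for any two distinct colors i ≠ j, the distance between color vertices c_i and c_j is at least 2(s-1) > s, and the distance between c_i and ĉ_j is at least 2(s-1)+1 > s. Hence no s-club of G' contains color vertices of two distinct colors, and any partition of G' into at most k s-clubs assigns each pair {c_i, ĉ_i} to a distinct s-club. -/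
/-- Vertices of the graph `G'` of the PC(k,s) reduction: the original vertices of
`G`, the color vertices `c_i`, `ĉ_i` (`i ∈ [k]`), and the internal auxiliary
vertices of the added paths of length `s-1`. -/
inductive RVtx (V : Type) (k s : ℕ) where
  | orig (v : V)
  | col (i : Fin k)
  | colh (i : Fin k)
  | aux (v : V) (i : Fin k) (j : Fin (s - 2))

/-- Base adjacency relation of `G'` (for a bipartite `G` with sides given by
`side : V → Bool`, where `side v = false` means `v ∈ V1`, and lists `L`):
the bipartite complement of `G` on original vertices; the edges `c_i — ĉ_i`; and,
for each `v` with `i ∈ L v`, a path `v — aux v i 0 — ⋯ — aux v i (s-3) — ĉ_i`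
(if `v ∈ V1`) resp. `— c_i` (if `v ∈ V2`). -/
def RRel {V : Type} {k s : ℕ} (G : SimpleGraph V) (side : V → Bool)
    (L : V → Finset (Fin k)) : RVtx V k s → RVtx V k s → Prop
  | RVtx.orig u, RVtx.orig v => side u ≠ side v ∧ ¬ G.Adj u v
  | RVtx.col i, RVtx.colh i' => i = i'
  | RVtx.orig u, RVtx.aux v i j => u = v ∧ i ∈ L v ∧ (j : ℕ) = 0
  | RVtx.aux u i j, RVtx.aux v i' j' =>
      u = v ∧ i = i' ∧ i ∈ L v ∧ (j' : ℕ) = (j : ℕ) + 1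
  | RVtx.aux v i j, RVtx.colh i' => i = i' ∧ i ∈ L v ∧ side v = false ∧ (j : ℕ) = s - 3
  | RVtx.aux v i j, RVtx.col i' => i = i' ∧ i ∈ L v ∧ side v = true ∧ (j : ℕ) = s - 3
  | _, _ => False

/-- The graph `G'` of the PC(k,s) reduction. -/
def RGraph {V : Type} {k s : ℕ} (G : SimpleGraph V) (side : V → Bool)
    (L : V → Finset (Fin k)) : SimpleGraph (RVtx V k s) :=
  SimpleGraph.fromRel (RRel G side L)

/-- A potential function centered at the color vertex `c_i` (if `b = false`) or
`ĉ_i` (if `b = true`); it is 1-Lipschitz along edges of `G'`. -/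
def pot {V : Type} {k s : ℕ} (side : V → Bool) (i : Fin k) (b : Bool) :
    RVtx V k s → ℤ
  | RVtx.orig v => if side v = b then (s : ℤ) else (s : ℤ) - 1
  | RVtx.col i' => if i' = i then (if b then 1 else 0)
      else (if b then 2 * (s : ℤ) - 1 else 2 * (s : ℤ) - 2)
  | RVtx.colh i' => if i' = i then (if b then 0 else 1)
      else (if b then 2 * (s : ℤ) - 2 else 2 * (s : ℤ) - 1)
  | RVtx.aux v i' j => if i' = i then
      (if side v = b then (s : ℤ) - 1 - (j : ℕ) else (s : ℤ) - 2 - (j : ℕ))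
      else (if side v = b then (s : ℤ) + 1 + (j : ℕ) else (s : ℤ) + (j : ℕ))

lemma pot_rel {V : Type} {k s : ℕ} (hs : 3 ≤ s) (G : SimpleGraph V)
    (side : V → Bool) (L : V → Finset (Fin k)) (i : Fin k) (b : Bool) :
    ∀ u v : RVtx V k s, RRel G side L u v →
      |pot side i b u - pot side i b v| ≤ 1 := by
  intro u v h
  rw [abs_le]
  cases u <;> cases v <;> try exact h.elim
  case orig.orig u v =>
    simp only [pot]
    cases b <;> split_ifs <;> first | contradiction | omega
  case col.colh i₁ i₂ =>
    obtain rfl : i₁ = i₂ := h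
    simp only [pot]
    cases b <;> split_ifs <;> first | contradiction | omega
  case orig.aux u v i' j =>
    obtain ⟨rfl, -, hj⟩ := h
    have hj' : ((j : ℕ) : ℤ) = 0 := by exact_mod_cast hj
    simp only [pot]
    cases b <;> split_ifs <;> first | contradiction | omega
  case aux.aux u i₁ j₁ v i₂ j₂ =>
    obtain ⟨rfl, rfl, -, hj⟩ := h
    have hj' : ((j₂ : ℕ) : ℤ) = (j₁ : ℕ) + 1 := by exact_mod_cast hj
    simp only [pot]
    cases b <;> split_ifs <;> first | contradiction | omega
  case aux.colh v i₁ j i₂ =>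
    obtain ⟨rfl, -, hside, hj⟩ := h
    have hj' : ((j : ℕ) : ℤ) = (s : ℤ) - 3 := by
      have : (j : ℕ) = s - 3 := hj
      omega
    simp only [pot, hside]
    cases b <;> split_ifs <;> first | contradiction | omega
  case aux.col v i₁ j i₂ =>
    obtain ⟨rfl, -, hside, hj⟩ := h
    have hj' : ((j : ℕ) : ℤ) = (s : ℤ) - 3 := by
      have : (j : ℕ) = s - 3 := hj
      omega
    simp only [pot, hside]
    cases b <;> split_ifs <;> first | contradiction | omega

lemma pot_adj {V : Type} {k s : ℕ} (hs : 3 ≤ s) (G : SimpleGraph V)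
    (side : V → Bool) (L : V → Finset (Fin k)) (i : Fin k) (b : Bool)
    {u v : RVtx V k s} (h : (RGraph G side L).Adj u v) :
    |pot side i b u - pot side i b v| ≤ 1 := by
  rw [RGraph, SimpleGraph.fromRel_adj] at h
  rcases h.2 with h' | h'
  · exact pot_rel hs G side L i b u v h'
  · rw [abs_sub_comm]
    exact pot_rel hs G side L i b v u h'

lemma pot_walk {V : Type} {k s : ℕ} (hs : 3 ≤ s) (G : SimpleGraph V)
    (side : V → Bool) (L : V → Finset (Fin k)) (i : Fin k) (b : Bool)
    {u v : RVtx V k s} (p : (RGraph G side L).Walk u v) :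
    |pot side i b u - pot side i b v| ≤ (p.length : ℤ) := by
  induction p with
  | nil => simp
  | cons h q ih =>
    calc |pot side i b _ - pot side i b _|
        ≤ |pot side i b _ - pot side i b _| + |pot side i b _ - pot side i b _| :=
          abs_sub_le _ _ _
      _ ≤ 1 + q.length := add_le_add (pot_adj hs G side L i b h) ih
      _ = ((q.cons h).length : ℤ) := by simp [SimpleGraph.Walk.length_cons]; ring

/-- Lower bound on walks between color vertices of distinct colors.
`b` selects whether the start is `c_i` (`false`) or `ĉ_i` (`true`),
`b'` whether the end is `c_j`/`ĉ_j`. -/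
lemma walk_lb {V : Type} {k s : ℕ} (hs : 3 ≤ s) (G : SimpleGraph V)
    (side : V → Bool) (L : V → Finset (Fin k)) {i j : Fin k} (hij : i ≠ j)
    (b b' : Bool)
    (p : (RGraph G side L).Walk
      (cond b (RVtx.colh i : RVtx V k s) (RVtx.col i))
      (cond b' (RVtx.colh j) (RVtx.col j))) :
    (cond (b == b') (2 * (s : ℤ) - 2) (2 * (s : ℤ) - 1)) ≤ (p.length : ℤ) := by
  have H := pot_walk hs G side L i b p
  have hji : ¬ j = i := fun h => hij h.symm
  rw [abs_le] at H
  cases b <;> cases b' <;>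
    simp only [Bool.cond_false, Bool.cond_true, pot, if_pos rfl, if_neg hji,
      Bool.false_eq_true, if_true, if_false, ite_true, ite_false] at H <;>
    simp only [show (false == false) = true from rfl, show (true == true) = true from rfl,
      show (false == true) = false from rfl, show (true == false) = false from rfl,
      Bool.cond_false, Bool.cond_true] <;>
    omega

/-- In `G'` (for `s ≥ 3`), for distinct colors `i ≠ j` every walk from `c_i` to `c_j`
has length at least `2(s-1)` and every walk from `c_i` to `ĉ_j` has length at least
`2(s-1)+1`, with `2(s-1) > s`.  Hence no `s`-club of `G'` contains color vertices of
two distinct colors, and any partition of `G'` into at most `k` `s`-clubs assigns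
each pair `{c_i, ĉ_i}` to its own cell. -/
theorem colorVertices_far_apart {V : Type} {k s : ℕ} (hs : 3 ≤ s)
    (G : SimpleGraph V) (side : V → Bool)
    (hG : ∀ u v : V, G.Adj u v → side u ≠ side v)
    (L : V → Finset (Fin k)) :
    (∀ i j : Fin k, i ≠ j →
      (∀ p : (RGraph G side L).Walk (RVtx.col i : RVtx V k s) (RVtx.col j),
        2 * (s - 1) ≤ p.length) ∧
      (∀ p : (RGraph G side L).Walk (RVtx.col i : RVtx V k s) (RVtx.colh j),
        2 * (s - 1) + 1 ≤ p.length)) ∧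
    s < 2 * (s - 1) ∧
    (∀ S : Set (RVtx V k s), IsSClub (RGraph G side L) s S →
      ∀ i j : Fin k, (RVtx.col i ∈ S ∨ RVtx.colh i ∈ S) →
        (RVtx.col j ∈ S ∨ RVtx.colh j ∈ S) → i = j) ∧
    (∀ (ι : Type) [Fintype ι] (P : ι → Set (RVtx V k s)),
      Fintype.card ι ≤ k →
      Pairwise (Function.onFun Disjoint P) →
      (⋃ a, P a) = Set.univ →
      (∀ a, IsSClub (RGraph G side L) s (P a)) →
      ∃ g : Fin k → ι, Function.Injective g ∧
        ∀ i : Fin k, RVtx.col i ∈ P (g i) ∧ RVtx.colh i ∈ P (g i)) := by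
  -- the club part
  have club : ∀ S : Set (RVtx V k s), IsSClub (RGraph G side L) s S →
      ∀ i j : Fin k, (RVtx.col i ∈ S ∨ RVtx.colh i ∈ S) →
        (RVtx.col j ∈ S ∨ RVtx.colh j ∈ S) → i = j := by
    intro S hS i j hi hj
    by_contra hij
    have key : ∀ (b b' : Bool),
        (cond b (RVtx.colh i : RVtx V k s) (RVtx.col i)) ∈ S →
        (cond b' (RVtx.colh j : RVtx V k s) (RVtx.col j)) ∈ S → False := by
      intro b b' hu hv
      obtain ⟨p, hp⟩ := hS ⟨_, hu⟩ ⟨_, hv⟩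
      have hq := walk_lb hs G side L hij b b'
        (p.map (SimpleGraph.Embedding.induce S).toHom)
      replace hq : (cond (b == b') (2 * (s : ℤ) - 2) (2 * (s : ℤ) - 1)) ≤ (p.length : ℤ) := by
        rw [← SimpleGraph.Walk.length_map (SimpleGraph.Embedding.induce S).toHom p]
        exact hq
      have hps : (p.length : ℤ) ≤ (s : ℤ) := by exact_mod_cast hp
      cases hbb : (b == b') <;> rw [hbb] at hq <;>
        simp only [Bool.cond_false, Bool.cond_true] at hq <;> omega
    rcases hi with hi | hi <;> rcases hj with hj | hj
    · exact key false false hi hj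
    · exact key false true hi hj
    · exact key true false hi hj
    · exact key true true hi hj
  refine ⟨?_, by omega, club, ?_⟩
  · intro i j hij
    constructor
    · intro p
      have h1 : (2 * (s : ℤ) - 2) ≤ (p.length : ℤ) :=
        walk_lb hs G side L hij false false p
      omega
    · intro p
      have h1 : (2 * (s : ℤ) - 1) ≤ (p.length : ℤ) :=
        walk_lb hs G side L hij false true p
      omega
  · intro ι _ P hcard hdisj hcover hclub
    have hmem : ∀ x : RVtx V k s, ∃ a, x ∈ P a := by
      intro x
      have : x ∈ ⋃ a, P a := by rw [hcover]; exact Set.mem_univ x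
      exact Set.mem_iUnion.mp this
    choose f hf using hmem
    set g : Fin k → ι := fun i => f (RVtx.col i) with hg
    have hgcol : ∀ i, RVtx.col i ∈ P (g i) := fun i => hf (RVtx.col i)
    have hginj : Function.Injective g := by
      intro i j hgij
      exact club (P (g i)) (hclub _) i j (Or.inl (hgcol i))
        (Or.inl (hgij ▸ hgcol j))
    have hbij : Function.Bijective g := by
      rw [Fintype.bijective_iff_injective_and_card]
      refine ⟨hginj, ?_⟩
      have := Fintype.card_le_of_injective g hginj
      simp only [Fintype.card_fin] at this ⊢
      omega
    refine ⟨g, hginj, fun i => ⟨hgcol i, ?_⟩⟩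
    have ha : RVtx.colh i ∈ P (f (RVtx.colh i)) := hf (RVtx.colh i)
    obtain ⟨i₀, hi₀⟩ := hbij.2 (f (RVtx.colh i))
    rw [← hi₀] at ha
    have : i₀ = i := club (P (g i₀)) (hclub _) i₀ i (Or.inl (hgcol i₀)) (Or.inr ha)
    rwa [this] at ha
end

section
/- Let G = (V1, V2, E) be bipartite with balanced list coloring classes S_1,...,S_k (each nonempty class either a single vertex or meeting both V1 and V2, each S_i independent, colors from lists). Then in the reduction graph G', each set S'_i = S_i ∪ {c_i, ĉ_i} ∪ {auxiliary vertices of paths from vertices of S_i to their color vertex} induces a subgraph of diameter at most s, i.e., is an s-club. -/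
/-- Given a balanced proper list coloring `c` of the bipartite graph `G` (every
nonempty color class is a single vertex or meets both sides; adjacent vertices get
different colors; colors come from the lists), each set
`S'_i = {v : c v = i} ∪ {c_i, ĉ_i} ∪ {auxiliary vertices of the paths from the
vertices of color `i` to their color vertex}` is an `s`-club of `G'`. -/
theorem balanced_classes_are_clubs {V : Type} {k s : ℕ} (hs : 3 ≤ s)
    (G : SimpleGraph V) (side : V → Bool)
    (hG : ∀ u v : V, G.Adj u v → side u ≠ side v)
    (L : V → Finset (Fin k)) (c : V → Fin k)
    (hlist : ∀ v : V, c v ∈ L v)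
    (hproper : ∀ u v : V, G.Adj u v → c u ≠ c v)
    (hbal : ∀ i : Fin k, (∃ v, c v = i) →
      (∃! v, c v = i) ∨
      ((∃ v, c v = i ∧ side v = false) ∧ (∃ v, c v = i ∧ side v = true))) :
    ∀ i : Fin k,
      IsSClub (RGraph G side L) s
        ({w : RVtx V k s | ∃ v, c v = i ∧
            (w = RVtx.orig v ∨ ∃ j : Fin (s - 2), w = RVtx.aux v i j)} ∪
          {RVtx.col i, RVtx.colh i}) := by
  intro i
  set S : Set (RVtx V k s) :=
    ({w : RVtx V k s | ∃ v, c v = i ∧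
        (w = RVtx.orig v ∨ ∃ j : Fin (s - 2), w = RVtx.aux v i j)} ∪
      {RVtx.col i, RVtx.colh i}) with hSdef
  set H : SimpleGraph S := (RGraph G side L).induce S with hH
  -- memberships
  have mo : ∀ v, c v = i → RVtx.orig v ∈ S := fun v hv => Or.inl ⟨v, hv, Or.inl rfl⟩
  have ma : ∀ v (j : Fin (s-2)), c v = i → RVtx.aux v i j ∈ S :=
    fun v j hv => Or.inl ⟨v, hv, Or.inr ⟨j, rfl⟩⟩
  have mc : RVtx.col i ∈ S := Or.inr (Or.inl rfl)
  have mh : RVtx.colh i ∈ S := Or.inr (Or.inr rfl)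
  have hadj : ∀ (a b : RVtx V k s) (ha : a ∈ S) (hb : b ∈ S),
      a ≠ b → (RRel G side L a b ∨ RRel G side L b a) →
      H.Adj ⟨a, ha⟩ ⟨b, hb⟩ := by
    intro a b ha hb hne hr
    exact ⟨hne, hr⟩
  have e_oo : ∀ u v (hu : c u = i) (hv : c v = i), side u ≠ side v →
      H.Adj ⟨_, mo u hu⟩ ⟨_, mo v hv⟩ := by
    intro u v hu hv hsd
    refine hadj _ _ _ _ ?_ (Or.inl ?_)
    · intro h; injection h with h'; exact hsd (h' ▸ rfl)
    · exact ⟨hsd, fun had => hproper u v had (hu.trans hv.symm)⟩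
  have e_oa : ∀ v (hv : c v = i), H.Adj ⟨_, mo v hv⟩ ⟨_, ma v ⟨0, by omega⟩ hv⟩ := by
    intro v hv
    exact hadj _ _ _ _ (by simp) (Or.inl ⟨rfl, hv ▸ hlist v, rfl⟩)
  have e_aa : ∀ v (hv : c v = i) (a b : Fin (s-2)), (b:ℕ) = (a:ℕ) + 1 →
      H.Adj ⟨_, ma v a hv⟩ ⟨_, ma v b hv⟩ := by
    intro v hv a b hab
    refine hadj _ _ _ _ ?_ (Or.inl ?_)
    · intro h; injection h with h1 h2 h3; rw [h3] at hab; omega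
    · exact ⟨rfl, rfl, hv ▸ hlist v, hab⟩
  have e_ah : ∀ v (hv : c v = i) (j : Fin (s-2)), side v = false → (j:ℕ) = s - 3 →
      H.Adj ⟨_, ma v j hv⟩ ⟨_, mh⟩ := by
    intro v hv j hsd hj
    exact hadj _ _ _ _ (by simp) (Or.inl ⟨rfl, hv ▸ hlist v, hsd, hj⟩)
  have e_ac : ∀ v (hv : c v = i) (j : Fin (s-2)), side v = true → (j:ℕ) = s - 3 →
      H.Adj ⟨_, ma v j hv⟩ ⟨_, mc⟩ := by
    intro v hv j hsd hj
    exact hadj _ _ _ _ (by simp) (Or.inl ⟨rfl, hv ▸ hlist v, hsd, hj⟩)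
  have e_cc : H.Adj ⟨_, mc⟩ ⟨_, mh⟩ := hadj _ _ _ _ (by simp) (Or.inl rfl)
  have wseg : ∀ v (hv : c v = i) (d : ℕ) (a b : Fin (s-2)), (b:ℕ) = (a:ℕ) + d →
      ∃ p : H.Walk ⟨_, ma v a hv⟩ ⟨_, ma v b hv⟩, p.length = d := by
    intro v hv d
    induction d with
    | zero =>
        intro a b hab
        have : a = b := Fin.ext (by omega)
        subst this
        exact ⟨SimpleGraph.Walk.nil, rfl⟩
    | succ d ih =>
        intro a b hab
        have hb' : (a:ℕ) + d < s - 2 := by have := b.isLt; omega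
        obtain ⟨p, hp⟩ := ih a ⟨(a:ℕ) + d, hb'⟩ rfl
        refine ⟨p.append (e_aa v hv ⟨(a:ℕ) + d, hb'⟩ b ?_).toWalk, ?_⟩
        · show (b:ℕ) = (a:ℕ) + d + 1; omega
        · simp [SimpleGraph.Walk.length_append, hp, SimpleGraph.Adj.toWalk]
  have wup : ∀ v (hv : c v = i) (j : Fin (s-2)),
      ∃ p : H.Walk ⟨_, mo v hv⟩ ⟨_, ma v j hv⟩, p.length = (j:ℕ) + 1 := by
    intro v hv j
    obtain ⟨p, hp⟩ := wseg v hv (j:ℕ) ⟨0, by omega⟩ j (by simp)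
    exact ⟨SimpleGraph.Walk.cons (e_oa v hv) p, by simp [hp]⟩
  have wtocolh : ∀ v (hv : c v = i), side v = false → ∀ (j : Fin (s-2)),
      ∃ p : H.Walk ⟨_, ma v j hv⟩ ⟨_, mh⟩, p.length = s - 2 - (j:ℕ) := by
    intro v hv hsd j
    have hlast : s - 3 < s - 2 := by omega
    have hjle : (j:ℕ) ≤ s - 3 := by have := j.isLt; omega
    obtain ⟨p, hp⟩ := wseg v hv (s - 3 - (j:ℕ)) j ⟨s-3, hlast⟩ (by show s - 3 = _; omega)
    refine ⟨p.append (e_ah v hv ⟨s-3, hlast⟩ hsd rfl).toWalk, ?_⟩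
    simp [SimpleGraph.Walk.length_append, hp, SimpleGraph.Adj.toWalk]
    omega
  have wtocol : ∀ v (hv : c v = i), side v = true → ∀ (j : Fin (s-2)),
      ∃ p : H.Walk ⟨_, ma v j hv⟩ ⟨_, mc⟩, p.length = s - 2 - (j:ℕ) := by
    intro v hv hsd j
    have hlast : s - 3 < s - 2 := by omega
    have hjle : (j:ℕ) ≤ s - 3 := by have := j.isLt; omega
    obtain ⟨p, hp⟩ := wseg v hv (s - 3 - (j:ℕ)) j ⟨s-3, hlast⟩ (by show s - 3 = _; omega)
    refine ⟨p.append (e_ac v hv ⟨s-3, hlast⟩ hsd rfl).toWalk, ?_⟩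
    simp [SimpleGraph.Walk.length_append, hp, SimpleGraph.Adj.toWalk]
    omega
  -- aux v j to col i / colh i for any side, length ≤ s - 1 - j
  have wAcol : ∀ v (hv : c v = i) (j : Fin (s-2)),
      ∃ p : H.Walk ⟨_, ma v j hv⟩ ⟨_, mc⟩, p.length ≤ s - 2 - (j:ℕ) + 1 := by
    intro v hv j
    cases hsv : side v with
    | true => obtain ⟨p, hp⟩ := wtocol v hv hsv j; exact ⟨p, by omega⟩
    | false =>
        obtain ⟨p, hp⟩ := wtocolh v hv hsv j
        exact ⟨p.append e_cc.symm.toWalk, by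
          simp [SimpleGraph.Walk.length_append, hp, SimpleGraph.Adj.toWalk]⟩
  have wAcolh : ∀ v (hv : c v = i) (j : Fin (s-2)),
      ∃ p : H.Walk ⟨_, ma v j hv⟩ ⟨_, mh⟩, p.length ≤ s - 2 - (j:ℕ) + 1 := by
    intro v hv j
    cases hsv : side v with
    | false => obtain ⟨p, hp⟩ := wtocolh v hv hsv j; exact ⟨p, by omega⟩
    | true =>
        obtain ⟨p, hp⟩ := wtocol v hv hsv j
        exact ⟨p.append e_cc.toWalk, by
          simp [SimpleGraph.Walk.length_append, hp, SimpleGraph.Adj.toWalk]⟩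
  -- orig to col / colh, length ≤ s
  have wOcol : ∀ v (hv : c v = i),
      ∃ p : H.Walk ⟨_, mo v hv⟩ ⟨_, mc⟩, p.length ≤ s := by
    intro v hv
    obtain ⟨p, hp⟩ := wAcol v hv ⟨0, by omega⟩
    refine ⟨SimpleGraph.Walk.cons (e_oa v hv) p, ?_⟩
    simp only [SimpleGraph.Walk.length_cons]
    omega
  have wOcolh : ∀ v (hv : c v = i),
      ∃ p : H.Walk ⟨_, mo v hv⟩ ⟨_, mh⟩, p.length ≤ s := by
    intro v hv
    obtain ⟨p, hp⟩ := wAcolh v hv ⟨0, by omega⟩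
    refine ⟨SimpleGraph.Walk.cons (e_oa v hv) p, ?_⟩
    simp only [SimpleGraph.Walk.length_cons]
    omega
  -- orig to orig, length ≤ 2
  have woo : ∀ u v (hu : c u = i) (hv : c v = i),
      ∃ p : H.Walk ⟨_, mo u hu⟩ ⟨_, mo v hv⟩, p.length ≤ 2 := by
    intro u v hu hv
    by_cases huv : u = v
    · subst huv; exact ⟨SimpleGraph.Walk.nil, by simp⟩
    · by_cases hsd : side u = side v
      · rcases hbal i ⟨u, hu⟩ with ⟨x, -, hun⟩ | ⟨⟨w1, hw1, hw1s⟩, ⟨w2, hw2, hw2s⟩⟩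
        · exact absurd ((hun u hu).trans (hun v hv).symm) huv
        · cases hsu : side u with
          | false =>
              refine ⟨(e_oo u w2 hu hw2 (by simp [hsu, hw2s])).toWalk.append
                (e_oo w2 v hw2 hv (by simp [hw2s, ← hsd, hsu])).toWalk, ?_⟩
              simp [SimpleGraph.Walk.length_append, SimpleGraph.Adj.toWalk]
          | true =>
              refine ⟨(e_oo u w1 hu hw1 (by simp [hsu, hw1s])).toWalk.append
                (e_oo w1 v hw1 hv (by simp [hw1s, ← hsd, hsu])).toWalk, ?_⟩
              simp [SimpleGraph.Walk.length_append, SimpleGraph.Adj.toWalk]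
      · exact ⟨(e_oo u v hu hv hsd).toWalk, by simp [SimpleGraph.Adj.toWalk]⟩
  -- orig to aux, length ≤ s
  have woa : ∀ u v (hu : c u = i) (hv : c v = i) (j : Fin (s-2)),
      ∃ p : H.Walk ⟨_, mo u hu⟩ ⟨_, ma v j hv⟩, p.length ≤ s := by
    intro u v hu hv j
    obtain ⟨p1, hp1⟩ := woo u v hu hv
    obtain ⟨p2, hp2⟩ := wup v hv j
    refine ⟨p1.append p2, ?_⟩
    rw [SimpleGraph.Walk.length_append]
    have := j.isLt; omega
  -- aux to aux, length ≤ s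
  have waa : ∀ u v (hu : c u = i) (hv : c v = i) (j j' : Fin (s-2)),
      ∃ p : H.Walk ⟨_, ma u j hu⟩ ⟨_, ma v j' hv⟩, p.length ≤ s := by
    intro u v hu hv j j'
    have hjl := j.isLt
    have hjl' := j'.isLt
    by_cases huv : u = v
    · subst huv
      rcases le_or_gt (j:ℕ) (j':ℕ) with h | h
      · obtain ⟨p, hp⟩ := wseg u hu ((j':ℕ) - (j:ℕ)) j j' (by omega)
        exact ⟨p, by omega⟩
      · obtain ⟨p, hp⟩ := wseg u hu ((j:ℕ) - (j':ℕ)) j' j (by omega)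
        exact ⟨p.reverse, by rw [SimpleGraph.Walk.length_reverse]; omega⟩
    · by_cases hsd : side u = side v
      · by_cases hA : (j:ℕ) + (j':ℕ) + 4 ≤ s
        · obtain ⟨p1, hp1⟩ := wup u hu j
          obtain ⟨p2, hp2⟩ := woo u v hu hv
          obtain ⟨p3, hp3⟩ := wup v hv j'
          refine ⟨(p1.reverse.append p2).append p3, ?_⟩
          simp only [SimpleGraph.Walk.length_append, SimpleGraph.Walk.length_reverse]
          omega
        · cases hsu : side u with
          | false =>
              have hsv : side v = false := by rw [← hsd, hsu]
              obtain ⟨p1, hp1⟩ := wtocolh u hu hsu j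
              obtain ⟨p2, hp2⟩ := wtocolh v hv hsv j'
              refine ⟨p1.append p2.reverse, ?_⟩
              simp only [SimpleGraph.Walk.length_append, SimpleGraph.Walk.length_reverse]
              omega
          | true =>
              have hsv : side v = true := by rw [← hsd, hsu]
              obtain ⟨p1, hp1⟩ := wtocol u hu hsu j
              obtain ⟨p2, hp2⟩ := wtocol v hv hsv j'
              refine ⟨p1.append p2.reverse, ?_⟩
              simp only [SimpleGraph.Walk.length_append, SimpleGraph.Walk.length_reverse]
              omega
      · by_cases hA : (j:ℕ) + (j':ℕ) + 3 ≤ s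
        · obtain ⟨p1, hp1⟩ := wup u hu j
          obtain ⟨p3, hp3⟩ := wup v hv j'
          refine ⟨(p1.reverse.append (e_oo u v hu hv hsd).toWalk).append p3, ?_⟩
          simp only [SimpleGraph.Walk.length_append, SimpleGraph.Walk.length_reverse,
            SimpleGraph.Adj.toWalk, SimpleGraph.Walk.length_cons, SimpleGraph.Walk.length_nil]
          omega
        · cases hsu : side u with
          | false =>
              have hsv : side v = true := by
                cases h : side v with
                | false => exact absurd (hsu.trans h.symm) hsd
                | true => rfl
              obtain ⟨p1, hp1⟩ := wtocolh u hu hsu j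
              obtain ⟨p2, hp2⟩ := wtocol v hv hsv j'
              refine ⟨(p1.append e_cc.symm.toWalk).append p2.reverse, ?_⟩
              simp only [SimpleGraph.Walk.length_append, SimpleGraph.Walk.length_reverse,
                SimpleGraph.Adj.toWalk, SimpleGraph.Walk.length_cons, SimpleGraph.Walk.length_nil]
              omega
          | true =>
              have hsv : side v = false := by
                cases h : side v with
                | false => rfl
                | true => exact absurd (hsu.trans h.symm) hsd
              obtain ⟨p1, hp1⟩ := wtocol u hu hsu j
              obtain ⟨p2, hp2⟩ := wtocolh v hv hsv j'
              refine ⟨(p1.append e_cc.toWalk).append p2.reverse, ?_⟩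
              simp only [SimpleGraph.Walk.length_append, SimpleGraph.Walk.length_reverse,
                SimpleGraph.Adj.toWalk, SimpleGraph.Walk.length_cons, SimpleGraph.Walk.length_nil]
              omega
  have sym : ∀ (a b : RVtx V k s) (ha : a ∈ S) (hb : b ∈ S),
      (∃ p : H.Walk ⟨a, ha⟩ ⟨b, hb⟩, p.length ≤ s) →
      ∃ p : H.Walk ⟨b, hb⟩ ⟨a, ha⟩, p.length ≤ s := by
    rintro a b ha hb ⟨p, hp⟩
    exact ⟨p.reverse, by rwa [SimpleGraph.Walk.length_reverse]⟩
  have key : ∀ (a b : RVtx V k s) (ha : a ∈ S) (hb : b ∈ S),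
      ∃ p : H.Walk ⟨a, ha⟩ ⟨b, hb⟩, p.length ≤ s := by
    intro a b ha hb
    have ha2 : a ∈ S := ha
    have hb2 : b ∈ S := hb
    rcases ha2 with ⟨x, hx, rfl | ⟨jx, rfl⟩⟩ | rfl | rfl <;>
      rcases hb2 with ⟨y, hy, rfl | ⟨jy, rfl⟩⟩ | rfl | rfl
    · obtain ⟨p, hp⟩ := woo x y hx hy; exact ⟨p, by omega⟩
    · exact woa x y hx hy jy
    · exact wOcol x hx
    · exact wOcolh x hx
    · exact sym _ _ _ _ (woa y x hy hx jx)
    · exact waa x y hx hy jx jy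
    · obtain ⟨p, hp⟩ := wAcol x hx jx; exact ⟨p, by omega⟩
    · obtain ⟨p, hp⟩ := wAcolh x hx jx; exact ⟨p, by omega⟩
    · exact sym _ _ _ _ (wOcol y hy)
    · obtain ⟨p, hp⟩ := wAcol y hy jy
      exact ⟨p.reverse, by rw [SimpleGraph.Walk.length_reverse]; omega⟩
    · exact ⟨SimpleGraph.Walk.nil, by simp only [SimpleGraph.Walk.length_nil]; omega⟩
    · exact ⟨e_cc.toWalk, by
        simp only [SimpleGraph.Adj.toWalk, SimpleGraph.Walk.length_cons,
          SimpleGraph.Walk.length_nil]; omega⟩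
    · exact sym _ _ _ _ (wOcolh y hy)
    · obtain ⟨p, hp⟩ := wAcolh y hy jy
      exact ⟨p.reverse, by rw [SimpleGraph.Walk.length_reverse]; omega⟩
    · exact ⟨e_cc.symm.toWalk, by
        simp only [SimpleGraph.Adj.toWalk, SimpleGraph.Walk.length_cons,
          SimpleGraph.Walk.length_nil]; omega⟩
    · exact ⟨SimpleGraph.Walk.nil, by simp only [SimpleGraph.Walk.length_nil]; omega⟩
  intro u v
  exact key u.1 v.1 u.2 v.2
end
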